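/- arXiv:1902.06401 — 6 statements merged into one kernel-verified Lean document; each statement's English description precedes it below -/
import Mathlib

section
/- Let C ⊆ ℝ^n be a proper convex cone, let m be a positive integer, and let K_1, …, K_m ⊆ ℝ^{d_1}, …, ℝ^{d_m} be closed convex cones with ℓ(K_i) ≤ k+1 for each i = 1, …, m. Suppose that for every N ∈ ℕ there exists a finite subset V_N ⊆ ext(C) with |V_N| ≥ N such that C is k-neighborly with respect to V_N. Then C does not have a (K_1 × ⋯ × K_m)-lift. -/
open scoped RealInnerProductSpace

/-- A closed convex cone (containing the origin). -/
def IsClosedConvexCone {E : Type*} [AddCommGroup E] [Module ℝ E] [TopologicalSpace E]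
    (K : Set E) : Prop :=
  IsClosed K ∧ Convex ℝ K ∧ (0 : E) ∈ K ∧ ∀ x ∈ K, ∀ t : ℝ, 0 ≤ t → t • x ∈ K

/-- A proper convex cone: closed, pointed, and full-dimensional. -/
def IsProperCone {E : Type*} [AddCommGroup E] [Module ℝ E] [TopologicalSpace E]
    (C : Set E) : Prop :=
  IsClosedConvexCone C ∧ C ∩ (-C) = {0} ∧ Submodule.span ℝ C = ⊤

/-- A face of a convex cone. -/
def IsFace {E : Type*} [AddCommGroup E] [Module ℝ E] (K F : Set E) : Prop :=
  F ⊆ K ∧ Convex ℝ F ∧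
    ∀ ⦃x⦄, x ∈ K → ∀ ⦃y⦄, y ∈ K → ∀ ⦃α : ℝ⦄, 0 < α → α < 1 →
      α • x + (1 - α) • y ∈ F → x ∈ F ∧ y ∈ F

/-- `FaceChainBound K m` says that every chain of nonempty faces of `K` has length at most `m`,
i.e. `ℓ(K) ≤ m`. -/
def FaceChainBound {E : Type*} [AddCommGroup E] [Module ℝ E] (K : Set E) (m : ℕ) : Prop :=
  ∀ (l : ℕ) (F : Fin l → Set E),
    (∀ i, IsFace K (F i) ∧ (F i).Nonempty) →
    (∀ i j : Fin l, i < j → F i ⊂ F j) → l ≤ m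

/-- The ray generated by `v`. -/
def rayOf {E : Type*} [AddCommGroup E] [Module ℝ E] (v : E) : Set E :=
  {x | ∃ t : ℝ, 0 ≤ t ∧ x = t • v}

/-- `v` generates an extreme ray of `K`. -/
def IsExtremeRay {E : Type*} [AddCommGroup E] [Module ℝ E] (K : Set E) (v : E) : Prop :=
  v ∈ K ∧ v ≠ 0 ∧ IsFace K (rayOf v)

/-- The dual cone. -/
def dualCone {E : Type*} [NormedAddCommGroup E] [InnerProductSpace ℝ E] (C : Set E) : Set E :=
  {f | ∀ x ∈ C, 0 ≤ ⟪f, x⟫}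

/-- Normalized extreme rays. -/
def extSet {E : Type*} [NormedAddCommGroup E] [InnerProductSpace ℝ E] (C : Set E) : Set E :=
  {v | ‖v‖ = 1 ∧ IsExtremeRay C v}

/-- `C` is `k`-neighborly with respect to `V ⊆ ext C`. -/
def IsNeighborly {E : Type*} [NormedAddCommGroup E] [InnerProductSpace ℝ E]
    (C : Set E) (k : ℕ) (V : Set E) : Prop :=
  V ⊆ extSet C ∧
    ∀ W ⊆ V, W.Finite → W.ncard = k →
      ∃ f ∈ dualCone C, (∀ v ∈ W, ⟪f, v⟫ = 0) ∧ ∀ v ∈ V \ W, 0 < ⟪f, v⟫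



section AuxRamsey

open Finset

theorem myRamsey (m : ℕ) : ∀ (r M : ℕ), ∃ N : ℕ, ∀ (c : Finset ℕ → Fin m) (S : Finset ℕ),
    N ≤ S.card → ∃ U ⊆ S, U.card = M ∧ ∃ i, ∀ A ⊆ U, A.card = r → c A = i := by
  intro r
  induction r with
  | zero =>
    intro M
    refine ⟨M, fun c S hS => ?_⟩
    obtain ⟨U, hU, hcard⟩ := Finset.exists_subset_card_eq hS
    exact ⟨U, hU, hcard, c ∅, fun A _ hA => by rw [Finset.card_eq_zero.mp hA]⟩
  | succ r IH =>
    intro M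
    have EH : ∀ s : ℕ, ∃ N : ℕ, ∀ (c : Finset ℕ → Fin m) (S : Finset ℕ), N ≤ S.card →
        ∃ (x : ℕ → ℕ) (cc : ℕ → Fin m),
          (∀ t < s, x t ∈ S) ∧
          (∀ t u, t < u → u < s → x t ≠ x u) ∧
          (∀ t < s, ∀ A : Finset ℕ, (∀ b ∈ A, ∃ u, t < u ∧ u < s ∧ x u = b) → A.card = r →
            c (insert (x t) A) = cc t) := by
      intro s
      induction s with
      | zero =>
        exact ⟨0, fun c S _ => ⟨fun _ => 0, fun _ => c ∅,
          fun t ht => absurd ht (Nat.not_lt_zero t),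
          fun t u _ hu => absurd hu (Nat.not_lt_zero u),
          fun t ht => absurd ht (Nat.not_lt_zero t)⟩⟩
      | succ s IHs =>
        obtain ⟨Ns, hNs⟩ := IHs
        obtain ⟨NR, hNR⟩ := IH Ns
        refine ⟨NR + 1, fun c S hcard => ?_⟩
        have hSne : S.Nonempty := Finset.card_pos.mp (by omega)
        obtain ⟨a, ha⟩ := hSne
        have hS' : NR ≤ (S.erase a).card := by
          rw [Finset.card_erase_of_mem ha]; omega
        obtain ⟨U, hUsub, hUcard, i₀, hmono⟩ := hNR (fun A => c (insert a A)) (S.erase a) hS'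
        obtain ⟨x, cc, hx1, hx2, hx3⟩ := hNs c U (le_of_eq hUcard.symm)
        refine ⟨fun t => match t with | 0 => a | t + 1 => x t,
                fun t => match t with | 0 => i₀ | t + 1 => cc t, ?_, ?_, ?_⟩
        · intro t ht
          match t with
          | 0 => exact ha
          | t + 1 => exact Finset.erase_subset a S (hUsub (hx1 t (by omega)))
        · intro t u htu hu
          match t, u with
          | 0, u + 1 =>
            have : x u ∈ S.erase a := hUsub (hx1 u (by omega))
            exact fun h => (Finset.ne_of_mem_erase this) h.symm
          | t + 1, u + 1 => exact hx2 t u (by omega) (by omega)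
        · intro t ht A hA hAcard
          match t with
          | 0 =>
            refine hmono A ?_ hAcard
            intro b hb
            obtain ⟨u, hu0, hus, hxu⟩ := hA b hb
            match u, hu0 with
            | u + 1, _ => exact hxu ▸ hx1 u (by omega)
          | t + 1 =>
            refine hx3 t (by omega) A ?_ hAcard
            intro b hb
            obtain ⟨u, hu0, hus, hxu⟩ := hA b hb
            match u, hu0 with
            | u + 1, hu0 => exact ⟨u, by omega, by omega, hxu⟩
    obtain ⟨N, hN⟩ := EH (m * M + 1)
    refine ⟨N, fun c S hcard => ?_⟩
    obtain ⟨x, cc, h1, h2, h3⟩ := hN c S hcard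
    set s := m * M + 1 with hs
    have hpig : ∃ i ∈ (Finset.univ : Finset (Fin m)),
        M < ((Finset.range s).filter fun t => cc t = i).card := by
      apply Finset.exists_lt_card_fiber_of_mul_lt_card_of_maps_to
      · intro t _; exact Finset.mem_univ _
      · simp [hs]
    obtain ⟨i, _, hi⟩ := hpig
    obtain ⟨F', hF'sub, hF'card⟩ :=
      Finset.exists_subset_card_eq (s := (Finset.range s).filter fun t => cc t = i) (le_of_lt hi)
    have hF'range : ∀ t ∈ F', t < s := fun t ht =>
      Finset.mem_range.mp (Finset.mem_filter.mp (hF'sub ht)).1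
    have hF'cc : ∀ t ∈ F', cc t = i := fun t ht =>
      (Finset.mem_filter.mp (hF'sub ht)).2
    have hinj : Set.InjOn x F' := by
      intro u hu v hv huv
      by_contra hne
      rcases Nat.lt_or_ge u v with h | h
      · exact h2 u v h (hF'range v hv) huv
      · exact h2 v u (by omega) (hF'range u hu) huv.symm
    refine ⟨F'.image x, ?_, ?_, i, ?_⟩
    · intro b hb
      obtain ⟨u, hu, rfl⟩ := Finset.mem_image.mp hb
      exact h1 u (hF'range u hu)
    · rw [Finset.card_image_of_injOn hinj, hF'card]
    · intro A hAsub hAcard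
      set I := F'.filter (fun u => x u ∈ A) with hI
      have hAI : A = I.image x := by
        apply Finset.Subset.antisymm
        · intro b hb
          obtain ⟨u, hu, rfl⟩ := Finset.mem_image.mp (hAsub hb)
          exact Finset.mem_image.mpr ⟨u, Finset.mem_filter.mpr ⟨hu, hb⟩, rfl⟩
        · intro b hb
          obtain ⟨u, hu, rfl⟩ := Finset.mem_image.mp hb
          exact (Finset.mem_filter.mp hu).2
      have hIne : I.Nonempty := by
        by_contra hne
        rw [Finset.not_nonempty_iff_eq_empty] at hne
        rw [hAI, hne] at hAcard
        simp at hAcard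
      set t := I.min' hIne with ht
      have htI : t ∈ I := I.min'_mem hIne
      have htF' : t ∈ F' := (Finset.mem_filter.mp htI).1
      have hxtA : x t ∈ A := (Finset.mem_filter.mp htI).2
      have hBcard : (A.erase (x t)).card = r := by
        rw [Finset.card_erase_of_mem hxtA, hAcard]
        omega
      have hkey := h3 t (hF'range t htF') (A.erase (x t)) ?_ hBcard
      · rw [Finset.insert_erase hxtA] at hkey
        rw [hkey]
        exact hF'cc t htF'
      · intro b hb
        have hbA : b ∈ A := Finset.mem_of_mem_erase hb
        have hbne : b ≠ x t := Finset.ne_of_mem_erase hb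
        rw [hAI] at hbA
        obtain ⟨u, hu, rfl⟩ := Finset.mem_image.mp hbA
        have hune : u ≠ t := fun h => hbne (by rw [h])
        have : t ≤ u := I.min'_le u hu
        exact ⟨u, by omega, hF'range u (Finset.mem_filter.mp hu).1, rfl⟩

end AuxRamsey

section ConeLemmas

variable {E : Type*} [AddCommGroup E] [Module ℝ E] {K : Set E}

/-- The minimal face of `K` at `y`. -/
def coneFace (K : Set E) (y : E) : Set E :=
  {x | x ∈ K ∧ ∃ ε : ℝ, 0 < ε ∧ y - ε • x ∈ K}

variable (hconv : Convex ℝ K) (hsc : ∀ x ∈ K, ∀ t : ℝ, 0 ≤ t → t • x ∈ K)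

theorem cone_add (hconv : Convex ℝ K) (hsc : ∀ x ∈ K, ∀ t : ℝ, 0 ≤ t → t • x ∈ K)
    {a b : E} (ha : a ∈ K) (hb : b ∈ K) : a + b ∈ K := by
  have hmid : (1/2 : ℝ) • a + (1/2 : ℝ) • b ∈ K := by
    have := hconv ha hb (by norm_num : (0:ℝ) ≤ 1/2) (by norm_num : (0:ℝ) ≤ 1/2) (by norm_num)
    exact this
  have := hsc _ hmid 2 (by norm_num)
  have heq : (2:ℝ) • ((1/2 : ℝ) • a + (1/2 : ℝ) • b) = a + b := by
    rw [smul_add, smul_smul, smul_smul]; norm_num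
  rwa [heq] at this

theorem cone_shrink (hconv : Convex ℝ K) {x y : E} {ε ε' : ℝ}
    (hy : y ∈ K) (h : y - ε • x ∈ K) (h1 : 0 < ε') (h2 : ε' ≤ ε) : y - ε' • x ∈ K := by
  have hε : 0 < ε := lt_of_lt_of_le h1 h2
  have key : (ε'/ε) • (y - ε • x) + (1 - ε'/ε) • y = y - ε' • x := by
    match_scalars <;> field_simp <;> ring
  have h0 : (0:ℝ) ≤ ε'/ε := by positivity
  have h1' : (0:ℝ) ≤ 1 - ε'/ε := by
    rw [sub_nonneg]; exact div_le_one_of_le₀ h2 hε.le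
  have hadd : ε'/ε + (1 - ε'/ε) = 1 := by ring
  have hc := hconv h hy h0 h1' hadd
  rwa [key] at hc

theorem coneFace_subset : coneFace K y ⊆ K := fun _ h => h.1

theorem zero_mem_coneFace {y : E} (hy : y ∈ K) (h0 : (0:E) ∈ K) : (0:E) ∈ coneFace K y :=
  ⟨h0, 1, one_pos, by simpa using hy⟩

theorem self_mem_coneFace {y : E} (hy : y ∈ K) (h0 : (0:E) ∈ K) : y ∈ coneFace K y :=
  ⟨hy, 1, one_pos, by simpa using h0⟩

theorem coneFace_mono_add (hconv : Convex ℝ K) (hsc : ∀ x ∈ K, ∀ t : ℝ, 0 ≤ t → t • x ∈ K)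
    {y z : E} (hz : z ∈ K) : coneFace K y ⊆ coneFace K (y + z) := by
  rintro x ⟨hx, ε, hε, hmem⟩
  refine ⟨hx, ε, hε, ?_⟩
  have heq : y + z - ε • x = (y - ε • x) + z := by abel
  rw [heq]
  exact cone_add hconv hsc hmem hz

theorem coneFace_isFace (hconv : Convex ℝ K) (hsc : ∀ x ∈ K, ∀ t : ℝ, 0 ≤ t → t • x ∈ K)
    {y : E} (hy : y ∈ K) : IsFace K (coneFace K y) := by
  refine ⟨coneFace_subset, ?_, ?_⟩
  · -- convexity
    rintro x₁ ⟨hx₁, ε₁, hε₁, h₁⟩ x₂ ⟨hx₂, ε₂, hε₂, h₂⟩ a b ha hb hab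
    refine ⟨hconv hx₁ hx₂ ha hb hab, min ε₁ ε₂, lt_min hε₁ hε₂, ?_⟩
    have m₁ : y - min ε₁ ε₂ • x₁ ∈ K := cone_shrink hconv hy h₁ (lt_min hε₁ hε₂) (min_le_left _ _)
    have m₂ : y - min ε₁ ε₂ • x₂ ∈ K := cone_shrink hconv hy h₂ (lt_min hε₁ hε₂) (min_le_right _ _)
    have key : a • (y - min ε₁ ε₂ • x₁) + b • (y - min ε₁ ε₂ • x₂)
        = (a + b) • y - min ε₁ ε₂ • (a • x₁ + b • x₂) := by module
    have := hconv m₁ m₂ ha hb hab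
    rw [key, hab, one_smul] at this
    exact this
  · -- face property
    rintro x hx z hz α hα hα1 ⟨_, ε, hε, hmem⟩
    constructor
    · refine ⟨hx, ε * α, mul_pos hε hα, ?_⟩
      have heq : y - (ε * α) • x = (y - ε • (α • x + (1-α) • z)) + (ε * (1-α)) • z := by
        module
      rw [heq]
      exact cone_add hconv hsc hmem (hsc _ hz _ (mul_nonneg hε.le (by linarith)))
    · refine ⟨hz, ε * (1 - α), mul_pos hε (by linarith), ?_⟩
      have heq : y - (ε * (1-α)) • z = (y - ε • (α • x + (1-α) • z)) + (ε * α) • x := by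
        module
      rw [heq]
      exact cone_add hconv hsc hmem (hsc _ hx _ (mul_nonneg hε.le hα.le))

end ConeLemmas


/-- If `C ⊆ ℝⁿ` is a proper convex cone that is `k`-neighborly with respect to
arbitrarily large finite subsets of its normalized extreme rays, and `K₁, …, Kₘ` are closed
convex cones each with `ℓ(Kᵢ) ≤ k + 1`, then `C` has no `K₁ × ⋯ × Kₘ`-lift. -/
theorem statement_0 {n k m : ℕ} (hm : 0 < m) (d : Fin m → ℕ)
    (C : Set (EuclideanSpace ℝ (Fin n))) (hC : IsProperCone C)
    (K : ∀ i : Fin m, Set (EuclideanSpace ℝ (Fin (d i))))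
    (hK : ∀ i, IsClosedConvexCone (K i))
    (hKl : ∀ i, FaceChainBound (K i) (k + 1))
    (hnb : ∀ N : ℕ, ∃ V : Set (EuclideanSpace ℝ (Fin n)),
      V.Finite ∧ N ≤ V.ncard ∧ IsNeighborly C k V) :
    ¬ ∃ (π : (∀ i, EuclideanSpace ℝ (Fin (d i))) →ₗ[ℝ] EuclideanSpace ℝ (Fin n))
        (L : Submodule ℝ (∀ i, EuclideanSpace ℝ (Fin (d i)))),
        C = π '' ({x | ∀ i, x i ∈ K i} ∩ (L : Set (∀ i, EuclideanSpace ℝ (Fin (d i))))) := by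
  rintro ⟨π, L, hlift⟩
  classical
  obtain ⟨NR, hNR⟩ := myRamsey m (k + 1) (2 * k + 1)
  obtain ⟨V, hVfin, hVcard, hVnb⟩ := hnb NR
  -- basic cone facts
  have hKconv : ∀ i, Convex ℝ (K i) := fun i => (hK i).2.1
  have hKzero : ∀ i, (0 : EuclideanSpace ℝ (Fin (d i))) ∈ K i := fun i => (hK i).2.2.1
  have hKsc : ∀ i, ∀ x ∈ K i, ∀ t : ℝ, 0 ≤ t → t • x ∈ K i := fun i => (hK i).2.2.2
  -- lifts of the points of V
  have hlifts : ∀ v ∈ V, ∃ x : ∀ i, EuclideanSpace ℝ (Fin (d i)),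
      (∀ i, x i ∈ K i) ∧ x ∈ L ∧ π x = v := by
    intro v hv
    have hvC : v ∈ C := ((hVnb.1 hv).2).1
    rw [hlift] at hvC
    obtain ⟨x, ⟨hx1, hx2⟩, hx3⟩ := hvC
    exact ⟨x, hx1, hx2, hx3⟩
  choose! xl hxlK hxlL hxlπ using hlifts
  -- sums of lifts stay in the cones and in L
  have hsumK : ∀ S : Finset (EuclideanSpace ℝ (Fin n)), ↑S ⊆ V →
      ∀ i, (∑ w ∈ S, xl w) i ∈ K i := by
    intro S hS i
    rw [Finset.sum_apply]
    refine Finset.sum_induction _ (· ∈ K i)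
      (fun a b ha hb => cone_add (hKconv i) (hKsc i) ha hb) (hKzero i) ?_
    intro w hw
    exact hxlK w (hS hw) i
  have hsumL : ∀ S : Finset (EuclideanSpace ℝ (Fin n)), ↑S ⊆ V →
      (∑ w ∈ S, xl w) ∈ L := fun S hS => Submodule.sum_mem _ fun w hw => hxlL w (hS hw)
  -- Claim A : the geometric consequence of k-neighborliness
  have claimA : ∀ S : Finset (EuclideanSpace ℝ (Fin n)), ↑S ⊆ V → S.card = k →
      ∀ v ∈ V, v ∉ S → ∃ i, xl v i ∉ coneFace (K i) ((∑ w ∈ S, xl w) i) := by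
    intro S hSV hScard v hvV hvS
    by_contra hcon
    push_neg at hcon
    have hex : ∀ i, ∃ ε : ℝ, 0 < ε ∧ (∑ w ∈ S, xl w) i - ε • xl v i ∈ K i :=
      fun i => (hcon i).2
    choose ε hεpos hεK using hex
    have hFinNe : (Finset.univ : Finset (Fin m)).Nonempty := ⟨⟨0, hm⟩, Finset.mem_univ _⟩
    have hε0pos : 0 < Finset.univ.inf' hFinNe ε := by
      rw [Finset.lt_inf'_iff]
      exact fun i _ => hεpos i
    set ε0 := Finset.univ.inf' hFinNe ε with hε0
    have hz : ∀ i, ((∑ w ∈ S, xl w) - ε0 • xl v) i ∈ K i := by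
      intro i
      have heq : ((∑ w ∈ S, xl w) - ε0 • xl v) i = (∑ w ∈ S, xl w) i - ε0 • xl v i := rfl
      rw [heq]
      exact cone_shrink (hKconv i) (hsumK S hSV i) (hεK i) hε0pos
        (Finset.inf'_le _ (Finset.mem_univ i))
    have hzL : (∑ w ∈ S, xl w) - ε0 • xl v ∈ L :=
      Submodule.sub_mem _ (hsumL S hSV) (Submodule.smul_mem _ _ (hxlL v hvV))
    have hzC : π ((∑ w ∈ S, xl w) - ε0 • xl v) ∈ C := by
      rw [hlift]
      exact ⟨_, ⟨hz, hzL⟩, rfl⟩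
    obtain ⟨f, hfdual, hf0, hfpos⟩ := hVnb.2 (↑S) hSV S.finite_toSet
      (by rw [Set.ncard_coe_finset, hScard])
    have h1 : 0 ≤ ⟪f, π ((∑ w ∈ S, xl w) - ε0 • xl v)⟫ := hfdual _ hzC
    rw [map_sub, map_smul, inner_sub_right, real_inner_smul_right, map_sum] at h1
    have hπσ : (∑ w ∈ S, π (xl w)) = ∑ w ∈ S, w :=
      Finset.sum_congr rfl fun w hw => hxlπ w (hSV hw)
    rw [hπσ, hxlπ v hvV, inner_sum] at h1
    have hzero : (∑ w ∈ S, ⟪f, w⟫) = 0 := Finset.sum_eq_zero fun w hw => hf0 w (Finset.mem_coe.mpr hw)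
    rw [hzero] at h1
    have hvpos : 0 < ⟪f, v⟫ := hfpos v ⟨hvV, fun hmem => hvS (by exact_mod_cast hmem)⟩
    nlinarith
  -- enumerate V
  set VF := hVfin.toFinset with hVFdef
  have hVFcard : NR ≤ VF.card := by
    rwa [Set.ncard_eq_toFinset_card V hVfin] at hVcard
  set φ : ℕ → EuclideanSpace ℝ (Fin n) :=
    fun t => if h : t < VF.card then (VF.equivFin.symm ⟨t, h⟩ : EuclideanSpace ℝ (Fin n)) else 0
    with hφdef
  have hφmem : ∀ t, t < VF.card → φ t ∈ V := by
    intro t ht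
    have h1 : φ t = (VF.equivFin.symm ⟨t, ht⟩ : EuclideanSpace ℝ (Fin n)) := by
      simp only [hφdef, dif_pos ht]
    rw [h1]
    have h2 := (VF.equivFin.symm ⟨t, ht⟩).2
    exact (Set.Finite.mem_toFinset hVfin).mp h2
  have hφinj : ∀ t u, t < VF.card → u < VF.card → φ t = φ u → t = u := by
    intro t u ht hu h
    simp only [hφdef, dif_pos ht, dif_pos hu] at h
    have h2 := VF.equivFin.symm.injective (Subtype.coe_injective h)
    exact congrArg Fin.val h2
  -- the coloring
  set c : Finset ℕ → Fin m := fun A =>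
    if hA : A.Nonempty then
      if h : ∃ i, xl (φ (A.min' hA)) i ∉
          coneFace (K i) ((∑ a ∈ A.erase (A.min' hA), xl (φ a)) i)
      then h.choose else ⟨0, hm⟩
    else ⟨0, hm⟩ with hcdef
  have hcgood : ∀ A : Finset ℕ, (∀ a ∈ A, a < VF.card) → A.card = k + 1 → ∀ hA : A.Nonempty,
      xl (φ (A.min' hA)) (c A) ∉
        coneFace (K (c A)) ((∑ a ∈ A.erase (A.min' hA), xl (φ a)) (c A)) := by
    intro A hAsub hAcard hA
    have ht0A : A.min' hA ∈ A := A.min'_mem hA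
    have ht0lt : A.min' hA < VF.card := hAsub _ ht0A
    have hSinj : ∀ a ∈ A.erase (A.min' hA), ∀ b ∈ A.erase (A.min' hA), φ a = φ b → a = b := by
      intro a ha b hb hab
      exact hφinj a b (hAsub _ (Finset.mem_of_mem_erase ha))
        (hAsub _ (Finset.mem_of_mem_erase hb)) hab
    have hSV : ↑((A.erase (A.min' hA)).image φ) ⊆ V := by
      intro x hx
      simp only [Finset.coe_image, Set.mem_image, Finset.mem_coe] at hx
      obtain ⟨a, ha, rfl⟩ := hx
      exact hφmem a (hAsub _ (Finset.mem_of_mem_erase ha))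
    have hScard : ((A.erase (A.min' hA)).image φ).card = k := by
      rw [Finset.card_image_of_injOn (fun a ha b hb => hSinj a ha b hb),
        Finset.card_erase_of_mem ht0A, hAcard]
      omega
    have hvV : φ (A.min' hA) ∈ V := hφmem _ ht0lt
    have hvS : φ (A.min' hA) ∉ (A.erase (A.min' hA)).image φ := by
      intro hmem
      obtain ⟨a, ha, hEq⟩ := Finset.mem_image.mp hmem
      exact Finset.ne_of_mem_erase ha
        (hφinj a (A.min' hA) (hAsub _ (Finset.mem_of_mem_erase ha)) ht0lt hEq)
    obtain ⟨i, hi⟩ := claimA _ hSV hScard (φ (A.min' hA)) hvV hvS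
    rw [Finset.sum_image hSinj] at hi
    have hex : ∃ i, xl (φ (A.min' hA)) i ∉
        coneFace (K i) ((∑ a ∈ A.erase (A.min' hA), xl (φ a)) i) := ⟨i, hi⟩
    have hcA : c A = hex.choose := by
      simp only [hcdef]
      rw [dif_pos hA, dif_pos hex]
    rw [hcA]
    exact hex.choose_spec
  -- apply Ramsey
  obtain ⟨U, hUsub, hUcard, istar, hUmono⟩ :=
    hNR c (Finset.range VF.card) (by rwa [Finset.card_range])
  -- enumerate U monotonically
  set w : ℕ → ℕ :=
    fun t => if h : t < 2 * k + 1 then (U.orderIsoOfFin hUcard ⟨t, h⟩ : ℕ) else 0 with hwdef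
  have hwU : ∀ t, t < 2 * k + 1 → w t ∈ U := by
    intro t ht
    have h1 : w t = (U.orderIsoOfFin hUcard ⟨t, ht⟩ : ℕ) := by simp only [hwdef, dif_pos ht]
    rw [h1]
    exact (U.orderIsoOfFin hUcard ⟨t, ht⟩).2
  have hwlt : ∀ t, t < 2 * k + 1 → w t < VF.card := fun t ht =>
    Finset.mem_range.mp (hUsub (hwU t ht))
  have hwmono : ∀ t u, t < u → u < 2 * k + 1 → w t < w u := by
    intro t u htu hu
    have ht : t < 2 * k + 1 := lt_trans htu hu
    have h1 : w t = (U.orderIsoOfFin hUcard ⟨t, ht⟩ : ℕ) := by simp only [hwdef, dif_pos ht]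
    have h2 : w u = (U.orderIsoOfFin hUcard ⟨u, hu⟩ : ℕ) := by simp only [hwdef, dif_pos hu]
    rw [h1, h2]
    have h3 : (⟨t, ht⟩ : Fin (2 * k + 1)) < ⟨u, hu⟩ := htu
    exact Subtype.coe_lt_coe.mpr ((U.orderIsoOfFin hUcard).lt_iff_lt.mpr h3)
  have hwV : ∀ t, t < 2 * k + 1 → φ (w t) ∈ V := fun t ht => hφmem _ (hwlt t ht)
  -- the chain of faces
  set G : ℕ → Set (EuclideanSpace ℝ (Fin (d istar))) :=
    fun j => coneFace (K istar) ((∑ t ∈ Finset.Icc (k + 1 - j) k, xl (φ (w t))) istar)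
    with hGdef
  have hσK : ∀ B : Finset ℕ, (∀ t ∈ B, t < 2 * k + 1) →
      ∀ i, (∑ t ∈ B, xl (φ (w t))) i ∈ K i := by
    intro B hB i
    rw [Finset.sum_apply]
    refine Finset.sum_induction _ (· ∈ K i)
      (fun a b ha hb => cone_add (hKconv i) (hKsc i) ha hb) (hKzero i) ?_
    intro t ht
    exact hxlK _ (hwV t (hB t ht)) i
  have hIccM : ∀ a b : ℕ, b ≤ 2 * k → ∀ t ∈ Finset.Icc a b, t < 2 * k + 1 := by
    intro a b hb t ht
    rw [Finset.mem_Icc] at ht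
    omega
  have hσsucc : ∀ j, j ≤ k →
      (∑ t ∈ Finset.Icc (k + 1 - (j + 1)) k, xl (φ (w t))) =
        xl (φ (w (k - j))) + ∑ t ∈ Finset.Icc (k + 1 - j) k, xl (φ (w t)) := by
    intro j hj
    have hIcc : Finset.Icc (k + 1 - (j + 1)) k = insert (k - j) (Finset.Icc (k + 1 - j) k) := by
      ext t
      simp only [Finset.mem_Icc, Finset.mem_insert]
      omega
    rw [hIcc, Finset.sum_insert (by simp only [Finset.mem_Icc]; omega)]
  have hstep_sub : ∀ j, j ≤ k → G j ⊆ G (j + 1) := by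
    intro j hj
    simp only [hGdef]
    rw [hσsucc j hj]
    have heq : (xl (φ (w (k - j))) + ∑ t ∈ Finset.Icc (k + 1 - j) k, xl (φ (w t))) istar =
        (∑ t ∈ Finset.Icc (k + 1 - j) k, xl (φ (w t))) istar + xl (φ (w (k - j))) istar := by
      simp [add_comm]
    rw [heq]
    exact coneFace_mono_add (hKconv istar) (hKsc istar)
      (hxlK _ (hwV (k - j) (by omega)) istar)
  have hstep_mem : ∀ j, j ≤ k → xl (φ (w (k - j))) istar ∈ G (j + 1) := by
    intro j hj
    simp only [hGdef]
    refine ⟨hxlK _ (hwV (k - j) (by omega)) istar, 1, one_pos, ?_⟩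
    rw [hσsucc j hj]
    have heq : (xl (φ (w (k - j))) + ∑ t ∈ Finset.Icc (k + 1 - j) k, xl (φ (w t))) istar -
        (1 : ℝ) • xl (φ (w (k - j))) istar =
        (∑ t ∈ Finset.Icc (k + 1 - j) k, xl (φ (w t))) istar := by
      simp only [one_smul, Pi.add_apply]
      abel
    rw [heq]
    exact hσK _ (hIccM _ _ (by omega)) istar
  have hstep_not : ∀ j, j ≤ k → xl (φ (w (k - j))) istar ∉ G j := by
    intro j hj
    set A := (Finset.Icc (k - j) (2 * k - j)).image w with hAdef
    have hwinj : ∀ a ∈ Finset.Icc (k - j) (2 * k - j), ∀ b ∈ Finset.Icc (k - j) (2 * k - j),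
        w a = w b → a = b := by
      intro a ha b hb hab
      rw [Finset.mem_Icc] at ha hb
      by_contra hne
      rcases Nat.lt_or_ge a b with h | h
      · exact absurd hab (Nat.ne_of_lt (hwmono a b h (by omega)))
      · exact absurd hab.symm (Nat.ne_of_lt (hwmono b a (by omega) (by omega)))
    have hAsubU : A ⊆ U := by
      intro b hb
      obtain ⟨t, ht, rfl⟩ := Finset.mem_image.mp hb
      rw [Finset.mem_Icc] at ht
      exact hwU t (by omega)
    have hAcard : A.card = k + 1 := by
      rw [hAdef, Finset.card_image_of_injOn (fun a ha b hb => hwinj a ha b hb), Nat.card_Icc]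
      omega
    have hAne : A.Nonempty := Finset.card_pos.mp (by omega)
    have hAlt : ∀ a ∈ A, a < VF.card := by
      intro a ha
      obtain ⟨t, ht, rfl⟩ := Finset.mem_image.mp ha
      rw [Finset.mem_Icc] at ht
      exact hwlt t (by omega)
    have hmin : A.min' hAne = w (k - j) := by
      apply le_antisymm
      · exact Finset.min'_le _ _ (Finset.mem_image.mpr
          ⟨k - j, by simp only [Finset.mem_Icc]; omega, rfl⟩)
      · apply Finset.le_min'
        intro b hb
        obtain ⟨t, ht, rfl⟩ := Finset.mem_image.mp hb
        rw [Finset.mem_Icc] at ht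
        rcases Nat.eq_or_lt_of_le ht.1 with h | h
        · rw [h]
        · exact (hwmono _ _ h (by omega)).le
    have hcolor : c A = istar := hUmono A hAsubU hAcard
    have hkey := hcgood A hAlt hAcard hAne
    rw [hmin, hcolor] at hkey
    -- rewrite the erased sum
    have herase : A.erase (w (k - j)) = (Finset.Icc (k + 1 - j) (2 * k - j)).image w := by
      rw [hAdef]
      ext b
      simp only [Finset.mem_erase, Finset.mem_image, Finset.mem_Icc]
      constructor
      · rintro ⟨hne, t, ht, rfl⟩
        refine ⟨t, ⟨?_, ht.2⟩, rfl⟩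
        rcases Nat.eq_or_lt_of_le ht.1 with h | h
        · exact absurd (by rw [h]) hne
        · omega
      · rintro ⟨t, ht, rfl⟩
        refine ⟨?_, t, ⟨by omega, ht.2⟩, rfl⟩
        have : w (k - j) < w t := hwmono _ _ (by omega) (by omega)
        omega
    have hsumE : ∑ a ∈ A.erase (w (k - j)), xl (φ a) =
        ∑ t ∈ Finset.Icc (k + 1 - j) (2 * k - j), xl (φ (w t)) := by
      rw [herase, Finset.sum_image]
      intro a ha b hb hab
      rw [Finset.mem_coe, Finset.mem_Icc] at ha hb
      by_contra hne
      rcases Nat.lt_or_ge a b with h | h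
      · exact absurd hab (Nat.ne_of_lt (hwmono a b h (by omega)))
      · exact absurd hab.symm (Nat.ne_of_lt (hwmono b a (by omega) (by omega)))
    rw [hsumE] at hkey
    -- G j is contained in the bigger face
    intro hmem
    apply hkey
    have hsplit : ∑ t ∈ Finset.Icc (k + 1 - j) (2 * k - j), xl (φ (w t)) =
        (∑ t ∈ Finset.Icc (k + 1 - j) k, xl (φ (w t))) +
          ∑ t ∈ Finset.Icc (k + 1 - j) (2 * k - j) \ Finset.Icc (k + 1 - j) k,
            xl (φ (w t)) := by
      have hsubset : Finset.Icc (k + 1 - j) k ⊆ Finset.Icc (k + 1 - j) (2 * k - j) := by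
        intro t ht
        rw [Finset.mem_Icc] at ht ⊢
        omega
      rw [← Finset.sum_sdiff hsubset]
      exact add_comm _ _
    have happ : (∑ t ∈ Finset.Icc (k + 1 - j) (2 * k - j), xl (φ (w t))) istar =
        (∑ t ∈ Finset.Icc (k + 1 - j) k, xl (φ (w t))) istar +
          (∑ t ∈ Finset.Icc (k + 1 - j) (2 * k - j) \ Finset.Icc (k + 1 - j) k,
            xl (φ (w t))) istar := by
      rw [hsplit]; rfl
    rw [happ]
    refine coneFace_mono_add (hKconv istar) (hKsc istar) ?_ hmem
    refine hσK _ ?_ istar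
    intro t ht
    have := Finset.mem_sdiff.mp ht
    have h2 := Finset.mem_Icc.mp this.1
    omega
  -- assemble the chain
  have hsub2 : ∀ j₂, j₂ ≤ k + 1 → ∀ j₁, j₁ ≤ j₂ → G j₁ ⊆ G j₂ := by
    intro j₂
    induction j₂ with
    | zero =>
      intro _ j₁ h
      have : j₁ = 0 := by omega
      rw [this]
    | succ j ih =>
      intro hj j₁ h1
      rcases Nat.eq_or_lt_of_le h1 with h | h
      · rw [h]
      · exact subset_trans (ih (by omega) j₁ (by omega)) (hstep_sub j (by omega))
  have hss : ∀ j₁ j₂, j₁ < j₂ → j₂ ≤ k + 1 → G j₁ ⊂ G j₂ := by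
    intro j₁ j₂ h12 h2
    refine ⟨hsub2 j₂ h2 j₁ (le_of_lt h12), fun hcontra => ?_⟩
    have h3 : xl (φ (w (k - j₁))) istar ∈ G j₂ :=
      hsub2 j₂ h2 (j₁ + 1) (by omega) (hstep_mem j₁ (by omega))
    exact hstep_not j₁ (by omega) (hcontra h3)
  have hKistar : ∀ j, j ≤ k + 1 → IsFace (K istar)
      ((fun j => G j) j) ∧ (G j).Nonempty := by
    intro j hj
    have hσ : (∑ t ∈ Finset.Icc (k + 1 - j) k, xl (φ (w t))) istar ∈ K istar :=
      hσK _ (hIccM _ _ (by omega)) istar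
    constructor
    · exact coneFace_isFace (hKconv istar) (hKsc istar) hσ
    · exact ⟨0, zero_mem_coneFace hσ (hKzero istar)⟩
  have hbound := hKl istar (k + 2) (fun j : Fin (k + 2) => G j) ?_ ?_
  · omega
  · intro j
    exact hKistar j (by omega)
  · intro i j hij
    exact hss i j (by exact_mod_cast hij) (by omega)
end

section
/- For all positive integers k and m there exists a positive integer N (one may take the k-uniform hypergraph Ramsey number R_k(k+1; (k+1)^m)) with the following property: if C ⊆ ℝ^n is a proper convex cone having a proper (K_1 × ⋯ × K_m)-lift where K_1, …, K_m are closed convex cones with ℓ(K_i) ≤ k+1 for each i ∈ [m], and C is k-neighborly with respect to some finite set V ⊆ ext(C), then |V| < N. -/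
open scoped RealInnerProductSpace

section Ramsey


/-- min-homogeneity property -/
def MinHom (k : ℕ) {κ : Type} (χ : Finset ℕ → κ) (T : Finset ℕ) : Prop :=
  ∀ (a : ℕ) (W W' : Finset ℕ), W ⊆ T → W' ⊆ T → W.card = k + 1 → W'.card = k + 1 →
    a ∈ W → a ∈ W' → (∀ b ∈ W, a ≤ b) → (∀ b ∈ W', a ≤ b) → χ W = χ W'

def RamseyProp (k : ℕ) (κ : Type) (s N : ℕ) : Prop :=
  ∀ (χ : Finset ℕ → κ) (A : Finset ℕ), N ≤ A.card →
    ∃ B ⊆ A, s ≤ B.card ∧ ∀ W ⊆ B, W.card = k → ∀ W' ⊆ B, W'.card = k → χ W = χ W'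

theorem minhom_exists (k : ℕ) (κ : Type)
    (IH : ∀ s : ℕ, ∃ N : ℕ, RamseyProp k κ s N) (t : ℕ) :
    ∃ N : ℕ, ∀ (χ : Finset ℕ → κ) (A : Finset ℕ), N ≤ A.card →
      ∃ T ⊆ A, T.card = t ∧ MinHom k χ T := by
  induction t with
  | zero =>
    exact ⟨0, fun χ A _ => ⟨∅, Finset.empty_subset _, rfl, by
      intro a W W' hW _ hWc _ haW _ _ _
      have := Finset.card_eq_zero.mpr (Finset.subset_empty.mp hW)
      omega⟩⟩
  | succ t ht =>
    obtain ⟨Nt, hNt⟩ := ht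
    obtain ⟨NR, hNR⟩ := IH Nt
    refine ⟨NR + 1, fun χ A hA => ?_⟩
    have hAne : A.Nonempty := Finset.card_pos.mp (by omega)
    set a := A.min' hAne with ha
    have haA : a ∈ A := A.min'_mem hAne
    have hA' : NR ≤ (A.erase a).card := by
      rw [Finset.card_erase_of_mem haA]; omega
    obtain ⟨B, hBsub, hBcard, hBmono⟩ := hNR (fun W => χ (insert a W)) (A.erase a) hA'
    obtain ⟨T', hT'B, hT'card, hT'mh⟩ := hNt χ B hBcard
    have haT' : a ∉ T' := fun h => (Finset.mem_erase.mp (hBsub (hT'B h))).1 rfl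
    have hlt : ∀ x ∈ T', a < x := by
      intro x hx
      have hxA := Finset.mem_erase.mp (hBsub (hT'B hx))
      exact lt_of_le_of_ne (A.min'_le x hxA.2) (Ne.symm hxA.1)
    refine ⟨insert a T', ?_, ?_, ?_⟩
    · intro x hx
      rcases Finset.mem_insert.mp hx with rfl | hx
      · exact haA
      · exact Finset.mem_of_mem_erase (hBsub (hT'B hx))
    · rw [Finset.card_insert_of_notMem haT', hT'card]
    · intro b W W' hWT hW'T hWc hW'c hbW hbW' hble hble'
      by_cases hab : b = a
      · subst hab
        have key : ∀ (Z : Finset ℕ), Z ⊆ insert a T' → Z.card = k + 1 → a ∈ Z →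
            Z.erase a ⊆ B ∧ (Z.erase a).card = k ∧ Z = insert a (Z.erase a) := by
          intro Z hZT hZc hbZ
          refine ⟨?_, ?_, (Finset.insert_erase hbZ).symm⟩
          · intro x hx
            have hx' := Finset.mem_erase.mp hx
            rcases Finset.mem_insert.mp (hZT hx'.2) with h | h
            · exact absurd h hx'.1
            · exact hT'B h
          · rw [Finset.card_erase_of_mem hbZ, hZc]
            omega
        obtain ⟨h1, h2, h3⟩ := key W hWT hWc hbW
        obtain ⟨h1', h2', h3'⟩ := key W' hW'T hW'c hbW'
        calc χ W = χ (insert a (W.erase a)) := by rw [← h3]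
          _ = χ (insert a (W'.erase a)) := hBmono _ h1 h2 _ h1' h2'
          _ = χ W' := by rw [← h3']
      · -- b ≠ a, so a ∉ W and a ∉ W', hence W W' ⊆ T'
        have key : ∀ (Z : Finset ℕ), Z ⊆ insert a T' → b ∈ Z → (∀ c ∈ Z, b ≤ c) → Z ⊆ T' := by
          intro Z hZT hbZ hble x hx
          rcases Finset.mem_insert.mp (hZT hx) with rfl | h
          · -- x = a ∈ Z, but b ≤ a and b ∈ Z ⊆ insert a T' means b = a or b ∈ T' (so a < b)
            exfalso
            rcases Finset.mem_insert.mp (hZT hbZ) with h' | h'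
            · exact hab h'
            · exact absurd (hble _ hx) (not_le.mpr (hlt _ h'))
          · exact h
        exact hT'mh b W W' (key W hWT hbW hble) (key W' hW'T hbW' hble')
          hWc hW'c hbW hbW' hble hble'

theorem hyperRamsey : ∀ (k : ℕ) (κ : Type) [Fintype κ] (s : ℕ), ∃ N : ℕ, RamseyProp k κ s N := by
  intro k
  induction k with
  | zero =>
    intro κ _ s
    refine ⟨s, fun χ A hA => ⟨A, subset_refl _, hA, ?_⟩⟩
    intro W _ hW W' _ hW'
    rw [Finset.card_eq_zero.mp hW, Finset.card_eq_zero.mp hW']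
  | succ k IH =>
    intro κ _ s
    obtain ⟨N, hN⟩ := minhom_exists k κ (IH κ) (k + Fintype.card κ * s + 1)
    refine ⟨N, fun χ A hA => ?_⟩
    classical
    haveI : Nonempty κ := ⟨χ ∅⟩
    obtain ⟨T, hTA, hTcard, hTmh⟩ := hN χ A hA
    -- T₀ : elements with at least k elements above them in T
    set T₀ := T.filter (fun x => k ≤ (T.filter (fun y => x < y)).card) with hT₀
    have hT₀card : Fintype.card κ * s < T₀.card := by
      -- elements not in T₀ inject into range k via card-above
      have hinj : Set.InjOn (fun x => (T.filter (fun y => x < y)).card)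
          ((T.filter (fun x => ¬ k ≤ (T.filter (fun y => x < y)).card)) : Finset ℕ) := by
        intro x hx y hy hxy
        simp only [Finset.coe_filter, Set.mem_setOf_eq] at hx hy
        simp only at hxy
        by_contra hne
        rcases lt_or_gt_of_ne hne with h | h
        · have hsub : T.filter (fun z => y < z) ⊂ T.filter (fun z => x < z) := by
            constructor
            · intro z hz
              simp only [Finset.mem_filter] at hz ⊢
              exact ⟨hz.1, lt_trans h hz.2⟩
            · intro hcon
              have : y ∈ T.filter (fun z => x < z) := by
                simp only [Finset.mem_filter]; exact ⟨hy.1, h⟩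
              have := hcon this
              simp only [Finset.mem_filter] at this
              exact lt_irrefl y this.2
          exact absurd hxy (by
            have := Finset.card_lt_card hsub
            omega)
        · have hsub : T.filter (fun z => x < z) ⊂ T.filter (fun z => y < z) := by
            constructor
            · intro z hz
              simp only [Finset.mem_filter] at hz ⊢
              exact ⟨hz.1, lt_trans h hz.2⟩
            · intro hcon
              have : x ∈ T.filter (fun z => y < z) := by
                simp only [Finset.mem_filter]; exact ⟨hx.1, h⟩
              have := hcon this
              simp only [Finset.mem_filter] at this
              exact lt_irrefl x this.2
          exact absurd hxy (by
            have := Finset.card_lt_card hsub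
            omega)
      have hmaps : ∀ x ∈ T.filter (fun x => ¬ k ≤ (T.filter (fun y => x < y)).card),
          (T.filter (fun y => x < y)).card ∈ Finset.range k := by
        intro x hx
        simp only [Finset.mem_filter] at hx
        simp only [Finset.mem_range]
        omega
      have hle := Finset.card_le_card_of_injOn _ hmaps hinj
      simp only [Finset.card_range] at hle
      have hsplit := Finset.card_filter_add_card_filter_not
        (s := T) (p := fun x => k ≤ (T.filter (fun y => x < y)).card)
      rw [hT₀]
      omega
    -- choose for every x ∈ T₀ a k-subset above it
    have hchoose : ∀ x ∈ T₀, ∃ S : Finset ℕ, S ⊆ T.filter (fun y => x < y) ∧ S.card = k := by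
      intro x hx
      simp only [hT₀, Finset.mem_filter] at hx
      exact Finset.exists_subset_card_eq hx.2
    choose S hS1 hS2 using hchoose
    -- pigeonhole
    obtain ⟨q, -, hq⟩ := Finset.exists_lt_card_fiber_of_mul_lt_card_of_maps_to
      (f := fun x => if hx : x ∈ T₀ then χ (insert x (S x hx)) else Classical.arbitrary κ)
      (fun x _ => Finset.mem_univ _) (by simpa using hT₀card)
    set B := T₀.filter (fun x => (if hx : x ∈ T₀ then χ (insert x (S x hx)) else Classical.arbitrary κ) = q) with hB
    have hBT : B ⊆ T := fun x hx => Finset.mem_of_mem_filter _ (Finset.filter_subset _ _ hx)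
    refine ⟨B, fun x hx => hTA (hBT hx), le_of_lt hq, ?_⟩
    -- key: any (k+1)-subset W of B has χ W = q
    have key : ∀ W ⊆ B, W.card = k + 1 → χ W = q := by
      intro W hWB hWc
      have hWne : W.Nonempty := Finset.card_pos.mp (by omega)
      set x := W.min' hWne with hx
      have hxW : x ∈ W := W.min'_mem hWne
      have hxB : x ∈ B := hWB hxW
      have hxT₀ : x ∈ T₀ := Finset.mem_of_mem_filter _ hxB
      have hxq : χ (insert x (S x hxT₀)) = q := by
        have := (Finset.mem_filter.mp hxB).2
        rwa [dif_pos hxT₀] at this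
      rw [← hxq]
      have hSsub : S x hxT₀ ⊆ T := fun y hy => Finset.mem_of_mem_filter _ (hS1 x hxT₀ hy)
      have hSlt : ∀ y ∈ S x hxT₀, x < y := fun y hy =>
        (Finset.mem_filter.mp (hS1 x hxT₀ hy)).2
      have hxnS : x ∉ S x hxT₀ := fun h => lt_irrefl x (hSlt x h)
      have hWsubT : W ⊆ T := hWB.trans hBT
      have hinsT : insert x (S x hxT₀) ⊆ T := by
        intro y hy
        rcases Finset.mem_insert.mp hy with rfl | hy
        · exact hBT hxB
        · exact hSsub hy
      have hinsC : (insert x (S x hxT₀)).card = k + 1 := by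
        rw [Finset.card_insert_of_notMem hxnS, hS2 x hxT₀]
      refine hTmh x W (insert x (S x hxT₀)) hWsubT hinsT hWc hinsC hxW
        (Finset.mem_insert_self _ _) (fun b hb => W.min'_le b hb) ?_
      intro b hb
      rcases Finset.mem_insert.mp hb with rfl | hb
      · exact le_refl _
      · exact le_of_lt (hSlt b hb)
    intro W hWB hWc W' hW'B hW'c
    rw [key W hWB hWc, key W' hW'B hW'c]

end Ramsey

section Faces

variable {X : Type*} [AddCommGroup X] [Module ℝ X] [TopologicalSpace X]
variable {K : Set X}

theorem cone_add_mem (hK : IsClosedConvexCone K) {x y : X} (hx : x ∈ K) (hy : y ∈ K) :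
    x + y ∈ K := by
  have h := hK.2.1 hx hy (by norm_num : (0:ℝ) ≤ 1/2) (by norm_num : (0:ℝ) ≤ 1/2) (by norm_num)
  have h2 := hK.2.2.2 _ h 2 (by norm_num)
  rw [smul_add, smul_smul, smul_smul] at h2
  norm_num at h2
  exact h2

theorem face_self (hK : IsClosedConvexCone K) : IsFace K K :=
  ⟨subset_refl _, hK.2.1, fun x hx y hy _ _ _ _ => ⟨hx, hy⟩⟩

/-- the minimal face containing a set -/
def minFace (K S : Set X) : Set X := ⋂₀ {F | IsFace K F ∧ S ⊆ F}

theorem subset_minFace {S : Set X} : S ⊆ minFace K S := by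
  intro x hx F hF
  exact hF.2 hx

theorem minFace_min {S F : Set X} (hF : IsFace K F) (hS : S ⊆ F) : minFace K S ⊆ F :=
  Set.sInter_subset_of_mem ⟨hF, hS⟩

theorem minFace_mono {S S' : Set X} (h : S ⊆ S') : minFace K S ⊆ minFace K S' := by
  intro x hx F hF
  exact hx F ⟨hF.1, h.trans hF.2⟩

theorem minFace_face (hK : IsClosedConvexCone K) {S : Set X} (hS : S ⊆ K) :
    IsFace K (minFace K S) := by
  refine ⟨?_, ?_, ?_⟩
  · exact (Set.sInter_subset_of_mem (⟨face_self hK, hS⟩ :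
      (K ∈ {F | IsFace K F ∧ S ⊆ F}))).trans (subset_refl K)
  · intro x hx y hy a b ha hb hab F hF
    exact hF.1.2.1 (hx F hF) (hy F hF) ha hb hab
  · intro x hx y hy α hα hα1 hmem
    constructor
    · intro F hF
      exact (hF.1.2.2 hx hy hα hα1 (hmem F hF)).1
    · intro F hF
      exact (hF.1.2.2 hx hy hα hα1 (hmem F hF)).2

theorem zero_mem_face (hK : IsClosedConvexCone K) {F : Set X} (hF : IsFace K F)
    (hne : F.Nonempty) : (0 : X) ∈ F := by
  obtain ⟨z, hz⟩ := hne
  have hzK : z ∈ K := hF.1 hz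
  have h2z : (2:ℝ) • z ∈ K := hK.2.2.2 _ hzK 2 (by norm_num)
  have key : (1/2 : ℝ) • ((2:ℝ) • z) + (1 - 1/2 : ℝ) • (0 : X) = z := by
    module
  exact (hF.2.2 h2z hK.2.2.1 (by norm_num : (0:ℝ) < 1/2) (by norm_num)
    (show _ ∈ F by rw [key]; exact hz)).2

/-- lineality space -/
def lineal (K : Set X) : Set X := K ∩ (-K)

theorem lineal_face (hK : IsClosedConvexCone K) : IsFace K (lineal K) := by
  refine ⟨Set.inter_subset_left, ?_, ?_⟩
  · intro x hx y hy a b ha hb hab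
    constructor
    · exact hK.2.1 hx.1 hy.1 ha hb hab
    · have : -(a • x + b • y) = a • (-x) + b • (-y) := by module
      rw [Set.mem_neg, this]
      exact hK.2.1 hx.2 hy.2 ha hb hab
  · intro x hx y hy α hα hα1 hmem
    have hs : -(α • x + (1-α) • y) ∈ K := hmem.2
    have hα0 : α ≠ 0 := ne_of_gt hα
    have h1α : (0:ℝ) < 1 - α := by linarith
    have hxm : -x ∈ K := by
      have e : -x = (1/α) • (-(α • x + (1-α) • y)) + ((1-α)/α) • y := by
        match_scalars <;> field_simp <;> ring
      rw [e]
      exact cone_add_mem hK (hK.2.2.2 _ hs _ (div_nonneg zero_le_one hα.le))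
        (hK.2.2.2 _ hy _ (div_nonneg h1α.le hα.le))
    have hym : -y ∈ K := by
      have e : -y = (1/(1-α)) • (-(α • x + (1-α) • y)) + (α/(1-α)) • x := by
        match_scalars <;> field_simp <;> ring
      rw [e]
      exact cone_add_mem hK (hK.2.2.2 _ hs _ (div_nonneg zero_le_one h1α.le))
        (hK.2.2.2 _ hx _ (div_nonneg hα.le h1α.le))
    exact ⟨⟨hx, hxm⟩, ⟨hy, hym⟩⟩

theorem lineal_subset_face (hK : IsClosedConvexCone K) {F : Set X} (hF : IsFace K F)
    (hne : F.Nonempty) : lineal K ⊆ F := by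
  intro z hz
  have h0 : (0 : X) ∈ F := zero_mem_face hK hF hne
  have hzK : z ∈ K := hz.1
  have hzm : -z ∈ K := hz.2
  have key : (1/2 : ℝ) • z + (1 - 1/2 : ℝ) • (-z) = (0 : X) := by
    module
  exact (hF.2.2 hzK hzm (by norm_num : (0:ℝ) < 1/2) (by norm_num)
    (show _ ∈ F by rw [key]; exact h0)).1

theorem zero_mem_lineal (hK : IsClosedConvexCone K) : (0:X) ∈ lineal K :=
  ⟨hK.2.2.1, by simp [Set.mem_neg, hK.2.2.1]⟩

/-- height of a face: longest chain of nonempty faces inside it -/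
def heightSet (K F : Set X) : Set ℕ :=
  {l | ∃ G : Fin l → Set X, (∀ j, IsFace K (G j) ∧ (G j).Nonempty) ∧
    (∀ j₁ j₂ : Fin l, j₁ < j₂ → G j₁ ⊂ G j₂) ∧ ∀ j, G j ⊆ F}

noncomputable def height (K F : Set X) : ℕ := sSup (heightSet K F)

variable {kk : ℕ}

theorem heightSet_bdd (hB : FaceChainBound K kk) (F : Set X) :
    ∀ l ∈ heightSet K F, l ≤ kk := by
  rintro l ⟨G, h1, h2, _⟩
  exact hB l G h1 h2

theorem one_mem_heightSet {F : Set X} (hF : IsFace K F) (hne : F.Nonempty) :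
    1 ∈ heightSet K F :=
  ⟨fun _ => F, fun _ => ⟨hF, hne⟩, fun j₁ j₂ h => absurd h (by omega), fun _ => subset_refl _⟩

theorem height_le (hB : FaceChainBound K kk) (F : Set X) : height K F ≤ kk := by
  by_cases hne : (heightSet K F).Nonempty
  · exact csSup_le hne (heightSet_bdd hB F)
  · rw [Set.not_nonempty_iff_eq_empty] at hne
    rw [height, hne, csSup_empty]
    exact bot_le.trans (Nat.zero_le kk)

theorem one_le_height (hB : FaceChainBound K kk) {F : Set X} (hF : IsFace K F)
    (hne : F.Nonempty) : 1 ≤ height K F :=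
  le_csSup ⟨kk, fun l hl => heightSet_bdd hB F l hl⟩ (one_mem_heightSet hF hne)

theorem height_mono (hB : FaceChainBound K kk) {F F' : Set X} (h : F ⊆ F') :
    height K F ≤ height K F' := by
  by_cases hne : (heightSet K F).Nonempty
  · refine csSup_le hne fun l hl => ?_
    obtain ⟨G, h1, h2, h3⟩ := hl
    exact le_csSup ⟨kk, fun l' hl' => heightSet_bdd hB F' l' hl'⟩
      ⟨G, h1, h2, fun j => (h3 j).trans h⟩
  · rw [Set.not_nonempty_iff_eq_empty] at hne
    rw [height, hne, csSup_empty]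
    exact bot_le

theorem height_strict (hB : FaceChainBound K kk) {F F' : Set X}
    (hF : IsFace K F) (hFne : F.Nonempty) (hF' : IsFace K F') (h : F ⊂ F') :
    height K F + 1 ≤ height K F' := by
  have hne : (heightSet K F).Nonempty := ⟨1, one_mem_heightSet hF hFne⟩
  have hbdd : BddAbove (heightSet K F) := ⟨kk, fun l hl => heightSet_bdd hB F l hl⟩
  have hmem : height K F ∈ heightSet K F := Nat.sSup_mem hne hbdd
  obtain ⟨G, h1, h2, h3⟩ := hmem
  refine le_csSup ⟨kk, fun l' hl' => heightSet_bdd hB F' l' hl'⟩ ?_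
  refine ⟨Fin.snoc G F', ?_, ?_, ?_⟩
  · intro j
    rcases Fin.eq_castSucc_or_eq_last j with ⟨i, rfl⟩ | rfl
    · rw [Fin.snoc_castSucc]
      exact h1 i
    · rw [Fin.snoc_last]
      exact ⟨hF', hFne.mono h.1⟩
  · intro j₁ j₂ hj
    rcases Fin.eq_castSucc_or_eq_last j₂ with ⟨i₂, rfl⟩ | rfl
    · rcases Fin.eq_castSucc_or_eq_last j₁ with ⟨i₁, rfl⟩ | rfl
      · rw [Fin.snoc_castSucc, Fin.snoc_castSucc]
        exact h2 i₁ i₂ (by exact_mod_cast hj)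
      · exfalso
        exact absurd (lt_of_lt_of_le hj (Fin.le_last _)) (lt_irrefl _)
    · rw [Fin.snoc_last]
      rcases Fin.eq_castSucc_or_eq_last j₁ with ⟨i₁, rfl⟩ | rfl
      · rw [Fin.snoc_castSucc]
        exact ssubset_of_subset_of_ssubset (h3 i₁) h
      · exact absurd hj (lt_irrefl _)
  · intro j
    rcases Fin.eq_castSucc_or_eq_last j with ⟨i, rfl⟩ | rfl
    · rw [Fin.snoc_castSucc]
      exact (h3 i).trans h.1
    · rw [Fin.snoc_last]

theorem eq_of_subset_of_height_le (hB : FaceChainBound K kk) {F F' : Set X}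
    (hF : IsFace K F) (hFne : F.Nonempty) (hF' : IsFace K F') (hsub : F ⊆ F')
    (hh : height K F' ≤ height K F) : F = F' := by
  by_contra hne
  have := height_strict hB hF hFne hF' (ssubset_of_ne_of_subset hne hsub)
  omega

theorem height_one_eq_lineal (hK : IsClosedConvexCone K) (hB : FaceChainBound K kk)
    {F : Set X} (hF : IsFace K F) (hFne : F.Nonempty) (h1 : height K F ≤ 1) :
    F = lineal K := by
  have hsub : lineal K ⊆ F := lineal_subset_face hK hF hFne
  by_contra hne
  have hss : lineal K ⊂ F := ssubset_of_ne_of_subset (Ne.symm hne) hsub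
  have h2 : 2 ∈ heightSet K F := by
    refine ⟨![lineal K, F], ?_, ?_, ?_⟩
    · intro j
      fin_cases j
      · exact ⟨lineal_face hK, ⟨0, zero_mem_lineal hK⟩⟩
      · exact ⟨hF, hFne⟩
    · intro j₁ j₂ hj
      fin_cases j₁ <;> fin_cases j₂ <;> simp_all <;> omega
    · intro j
      fin_cases j
      · exact hsub
      · exact subset_refl _
  have h3 : 2 ≤ height K F := le_csSup ⟨kk, fun l hl => heightSet_bdd hB F l hl⟩ h2
  omega

theorem face_zeroSet (hK : IsClosedConvexCone K) (g : X →ₗ[ℝ] ℝ)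
    (hg : ∀ x ∈ K, 0 ≤ g x) : IsFace K {x | x ∈ K ∧ g x = 0} := by
  refine ⟨fun x hx => hx.1, ?_, ?_⟩
  · intro x hx y hy a b ha hb hab
    refine ⟨hK.2.1 hx.1 hy.1 ha hb hab, ?_⟩
    simp [map_add, map_smul, hx.2, hy.2]
  · intro x hx y hy α hα hα1 hmem
    have h1 : α * g x + (1 - α) * g y = 0 := by
      have := hmem.2
      simpa [map_add, map_smul] using this
    have hgx : 0 ≤ g x := hg x hx
    have hgy : 0 ≤ g y := hg y hy
    have hgx0 : g x = 0 := by nlinarith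
    have hgy0 : g y = 0 := by nlinarith
    exact ⟨⟨hx, hgx0⟩, ⟨hy, hgy0⟩⟩

end Faces

section Combinatorial

variable {X : Type*} [AddCommGroup X] [Module ℝ X] [TopologicalSpace X]
variable {K : Set X}

theorem key_combinatorial {ι : Type*} (hK : IsClosedConvexCone K) {k : ℕ} (hk : 1 ≤ k)
    (hB : FaceChainBound K (k+1)) (U : Finset ι) (y : ι → X)
    (hy : ∀ v ∈ U, y v ∈ K) (hU : U.card = k + 1)
    (hcol : ∀ W ⊆ U, W.card = k → ∀ W' ⊆ U, W'.card = k →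
      height K (minFace K (y '' ↑W)) = height K (minFace K (y '' ↑W'))) :
    ∀ W ⊆ U, W.card = k → minFace K (y '' ↑W) = minFace K (y '' ↑U) := by
  classical
  have hpts : ∀ S : Finset ι, S ⊆ U → (y '' ↑S) ⊆ K := by
    rintro S hS _ ⟨v, hv, rfl⟩
    exact hy v (hS hv)
  have hface : ∀ S : Finset ι, S ⊆ U → IsFace K (minFace K (y '' ↑S)) :=
    fun S hS => minFace_face hK (hpts S hS)
  have hmono : ∀ S T : Finset ι, S ⊆ T → minFace K (y '' ↑S) ⊆ minFace K (y '' ↑T) :=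
    fun S T h => minFace_mono (Set.image_mono (Finset.coe_subset.mpr h))
  have hnonempty : ∀ S : Finset ι, S.Nonempty → (minFace K (y '' ↑S)).Nonempty := by
    rintro S ⟨v, hv⟩
    exact ⟨y v, subset_minFace ⟨v, by simpa using hv, rfl⟩⟩
  -- take a reference k-subset
  have hUne : U.Nonempty := Finset.card_pos.mp (by omega)
  obtain ⟨u₀, hu₀⟩ := hUne
  set W₀ := U.erase u₀ with hW₀
  have hW₀sub : W₀ ⊆ U := Finset.erase_subset _ _
  have hW₀card : W₀.card = k := by rw [hW₀, Finset.card_erase_of_mem hu₀, hU]; omega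
  set c := height K (minFace K (y '' ↑W₀)) with hc
  set H := height K (minFace K (y '' ↑U)) with hH
  have hcW : ∀ W ⊆ U, W.card = k → height K (minFace K (y '' ↑W)) = c :=
    fun W hWU hWc => hcol W hWU hWc W₀ hW₀sub hW₀card
  have hcH : c ≤ H := hc ▸ height_mono hB (hmono W₀ U hW₀sub)
  have hHk : H ≤ k + 1 := height_le hB _
  by_cases hch : H ≤ c
  · intro W hWU hWc
    have hWne : W.Nonempty := Finset.card_pos.mp (by omega)
    exact eq_of_subset_of_height_le hB (hface W hWU) (hnonempty W hWne)
      (hface U (subset_refl _)) (hmono W U hWU) (by rw [hcW W hWU hWc]; exact hch)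
  · exfalso
    have hcltH : c < H := lt_of_le_of_ne hcH (fun h => hch (le_of_eq h.symm))
    -- star property
    have star : ∀ (a : ι) (S : Finset ι), a ∈ U → a ∉ S → S ⊆ U →
        y a ∈ minFace K (y '' ↑S) → False := by
      intro a S haU haS hSU hya
      have hSE : S ⊆ U.erase a := fun x hx =>
        Finset.mem_erase.mpr ⟨fun h => haS (h ▸ hx), hSU hx⟩
      have h1 : minFace K (y '' ↑S) ⊆ minFace K (y '' ↑(U.erase a)) := hmono _ _ hSE
      have h2 : y '' ↑U ⊆ minFace K (y '' ↑(U.erase a)) := by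
        rintro _ ⟨u, hu, rfl⟩
        by_cases hua : u = a
        · exact h1 (hua ▸ hya)
        · exact subset_minFace ⟨u, by simp [Finset.mem_erase, hua, hu]
            , rfl⟩
      have h3 : minFace K (y '' ↑U) ⊆ minFace K (y '' ↑(U.erase a)) :=
        minFace_min (hface _ (Finset.erase_subset _ _)) h2
      have h4 : H ≤ height K (minFace K (y '' ↑(U.erase a))) := height_mono hB h3
      have h5 : height K (minFace K (y '' ↑(U.erase a))) = c :=
        hcW _ (Finset.erase_subset _ _) (by rw [Finset.card_erase_of_mem haU, hU]; omega)
      omega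
    -- chain height growth
    have chain : ∀ (n : ℕ) (S : Finset ι), S.Nonempty → S ⊆ U → n ≤ U.card - S.card →
        height K (minFace K (y '' ↑S)) + n ≤ H := by
      intro n
      induction n with
      | zero =>
        intro S hSne hSU _
        simpa using height_mono hB (hmono S U hSU)
      | succ n ih =>
        intro S hSne hSU hn
        have hSsub : S ⊂ U := Finset.ssubset_iff_of_subset hSU |>.mpr (by
          by_contra hcon
          push_neg at hcon
          have : U ⊆ S := hcon
          have := Finset.card_le_card this
          omega)
        obtain ⟨a, haU, haS⟩ := Finset.exists_of_ssubset hSsub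
        have hins : S ⊆ insert a S := Finset.subset_insert _ _
        have hinsU : insert a S ⊆ U := Finset.insert_subset haU hSU
        have hstrict : minFace K (y '' ↑S) ⊂ minFace K (y '' ↑(insert a S)) := by
          refine ssubset_of_ne_of_subset ?_ (hmono _ _ hins)
          intro heq
          have : y a ∈ minFace K (y '' ↑(insert a S)) :=
            subset_minFace ⟨a, by simp, rfl⟩
          rw [← heq] at this
          exact star a S haU haS hSU this
        have h1 : height K (minFace K (y '' ↑S)) + 1 ≤
            height K (minFace K (y '' ↑(insert a S))) :=
          height_strict hB (hface S hSU) (hnonempty S hSne) (hface _ hinsU) hstrict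
        have h2 := ih (insert a S) ⟨a, Finset.mem_insert_self _ _⟩ hinsU (by
          rw [Finset.card_insert_of_notMem haS]
          omega)
        omega
    -- two distinct elements of U
    have h2card : 1 < U.card := by omega
    obtain ⟨u₁, hu₁, u₂, hu₂, hne12⟩ := Finset.one_lt_card.mp h2card
    have hsingle : ∀ u ∈ U, minFace K (y '' ↑({u} : Finset ι)) = lineal K := by
      intro u hu
      have h1 := chain k {u} ⟨u, Finset.mem_singleton_self u⟩
        (Finset.singleton_subset_iff.mpr hu) (by simp [hU])
      refine height_one_eq_lineal hK hB (hface _ (Finset.singleton_subset_iff.mpr hu))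
        (hnonempty _ ⟨u, Finset.mem_singleton_self u⟩) ?_
      omega
    have hy2 : y u₂ ∈ minFace K (y '' ↑({u₂} : Finset ι)) :=
      subset_minFace ⟨u₂, by simp, rfl⟩
    rw [hsingle u₂ hu₂, ← hsingle u₁ hu₁] at hy2
    exact star u₂ {u₁} hu₂ (by simp [Ne.symm]; exact fun h => hne12 h.symm)
      (Finset.singleton_subset_iff.mpr hu₁) hy2

end Combinatorial

theorem intrinsic_absorb {E : Type*} [AddCommGroup E] [Module ℝ E] [TopologicalSpace E]
    [IsTopologicalAddGroup E] [ContinuousSMul ℝ E]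
    {K : Set E} (h0 : (0:E) ∈ K) {x₀ : E} (hx₀ : x₀ ∈ intrinsicInterior ℝ K)
    {v : E} (hv : v ∈ Submodule.span ℝ K) :
    ∃ δ : ℝ, 0 < δ ∧ x₀ + δ • v ∈ K := by
  obtain ⟨z, hz, rfl⟩ := (mem_intrinsicInterior).mp hx₀
  have hspan_le : Submodule.span ℝ K ≤ (affineSpan ℝ K).direction := by
    rw [direction_affineSpan, vectorSpan_def]
    refine Submodule.span_le.mpr fun x hx => Submodule.subset_span ?_
    have : x -ᵥ (0:E) ∈ K -ᵥ K := Set.vsub_mem_vsub hx h0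
    simpa using this
  have hvdir : v ∈ (affineSpan ℝ K).direction := hspan_le hv
  set q : ℝ → (affineSpan ℝ K : AffineSubspace ℝ E) := fun t =>
    ⟨t • v +ᵥ (z : E), AffineSubspace.vadd_mem_of_mem_direction
      (Submodule.smul_mem _ t hvdir) z.2⟩ with hq
  have hqc : Continuous q := by
    refine Continuous.subtype_mk ?_ _
    exact (continuous_id.smul continuous_const).add continuous_const
  have hq0 : q 0 = z := by
    apply Subtype.ext
    simp [hq]
  have hopen : IsOpen (q ⁻¹' (interior ((Subtype.val) ⁻¹' K))) :=
    isOpen_interior.preimage hqc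
  have h0mem : (0:ℝ) ∈ q ⁻¹' (interior ((Subtype.val) ⁻¹' K)) := by
    simp only [Set.mem_preimage, hq0]
    exact hz
  obtain ⟨ε, hε, hball⟩ := Metric.isOpen_iff.mp hopen 0 h0mem
  refine ⟨ε/2, by linarith, ?_⟩
  have : q (ε/2) ∈ interior ((Subtype.val) ⁻¹' K) := hball (by
    simp only [Metric.mem_ball, Real.dist_eq, sub_zero]
    rw [abs_of_pos (by linarith)]
    linarith)
  have := interior_subset this
  simp only [Set.mem_preimage] at this
  simpa [hq, add_comm] using this

theorem cone_functional_extension {E : Type*} [AddCommGroup E] [Module ℝ E] [TopologicalSpace E]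
    [IsTopologicalAddGroup E] [ContinuousSMul ℝ E]
    {K : Set E} (hK : IsClosedConvexCone K)
    (L : Submodule ℝ E) (φ : E →ₗ[ℝ] ℝ)
    (hφ : ∀ x ∈ K ∩ (L : Set E), 0 ≤ φ x)
    (hx₀ : ((L : Set E) ∩ intrinsicInterior ℝ K).Nonempty) :
    ∃ g : E →ₗ[ℝ] ℝ, (∀ x ∈ K, 0 ≤ g x) ∧ ∀ x ∈ L, g x = φ x := by
  obtain ⟨x₀, hx₀L, hx₀i⟩ := hx₀
  set U : Submodule ℝ E := Submodule.span ℝ K ⊔ L with hU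
  obtain ⟨T, hcompl⟩ := Submodule.exists_isCompl U
  set s : ConvexCone ℝ E :=
    { carrier := {x | ∃ p ∈ K, ∃ t ∈ T, x = p + t}
      smul_mem' := by
        rintro c hc x ⟨p, hp, t, ht, rfl⟩
        exact ⟨c • p, hK.2.2.2 _ hp c hc.le, c • t, T.smul_mem c ht, by rw [smul_add]⟩
      add_mem' := by
        rintro x ⟨p, hp, t, ht, rfl⟩ x' ⟨p', hp', t', ht', rfl⟩
        exact ⟨p + p', cone_add_mem hK hp hp', t + t', T.add_mem ht ht', by abel⟩ } with hs
  have hnonneg : ∀ x : (φ.toPMap L).domain, (x : E) ∈ s → 0 ≤ (φ.toPMap L) x := by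
    rintro ⟨x, hxL⟩ ⟨p, hp, t, ht, hxpt⟩
    have hpU : p ∈ U := le_sup_left (α := Submodule ℝ E) (Submodule.subset_span hp)
    have hxU : x ∈ U := le_sup_right (α := Submodule ℝ E) hxL
    have hxpt' : x = p + t := hxpt
    have htU : t ∈ U := by
      have ht' : t = x - p := by rw [hxpt']; abel
      rw [ht']
      exact U.sub_mem hxU hpU
    have ht0 : t = 0 := by
      have := hcompl.disjoint
      rw [Submodule.disjoint_def] at this
      exact this t htU ht
    have hxK : x ∈ K := by rw [hxpt', ht0, add_zero]; exact hp
    simpa [LinearMap.toPMap] using hφ x ⟨hxK, hxL⟩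
  have hdense : ∀ y, ∃ x : (φ.toPMap L).domain, (x : E) + y ∈ s := by
    intro y
    have hy : y ∈ U ⊔ T := by rw [hcompl.codisjoint.eq_top]; trivial
    obtain ⟨a, haU, b, hbT, rfl⟩ := Submodule.mem_sup.mp hy
    obtain ⟨a₁, ha₁, a₂, ha₂, rfl⟩ := Submodule.mem_sup.mp haU
    obtain ⟨δ, hδ, hδK⟩ := intrinsic_absorb hK.2.2.1 hx₀i ha₁
    refine ⟨⟨(1/δ) • x₀ - a₂, L.sub_mem (L.smul_mem _ hx₀L) ha₂⟩, ?_⟩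
    refine ⟨(1/δ) • x₀ + a₁, ?_, b, hbT, by push_cast; abel⟩
    have h1 : (1/δ) • (x₀ + δ • a₁) ∈ K := hK.2.2.2 _ hδK _ (by positivity)
    have h2 : (1/δ) • (x₀ + δ • a₁) = (1/δ) • x₀ + a₁ := by
      have hδ0 : δ ≠ 0 := ne_of_gt hδ
      match_scalars <;> field_simp
    rwa [h2] at h1
  obtain ⟨g, hg1, hg2⟩ := riesz_extension (s.toPointedCone ⟨0, hK.2.2.1, 0, T.zero_mem, by rw [add_zero]⟩) (φ.toPMap L) hnonneg hdense
  refine ⟨g, ?_, ?_⟩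
  · intro x hx
    exact hg2 x ⟨x, hx, 0, T.zero_mem, by rw [add_zero]⟩
  · intro x hxL
    have := hg1 ⟨x, hxL⟩
    simpa [LinearMap.toPMap] using this


/-- For all positive integers `k` and `m` there is a positive integer `N`
(e.g. the Ramsey number `R_k(k+1; (k+1)^m)`) such that: if a proper convex cone `C` has a proper
`K₁ × ⋯ × Kₘ`-lift where each `Kᵢ` is a closed convex cone with `ℓ(Kᵢ) ≤ k + 1`, and `C` is
`k`-neighborly with respect to a finite set `V` of normalized extreme rays, then `|V| < N`. -/
theorem statement_1 (k m : ℕ) (hk : 0 < k) (hm : 0 < m) :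
    ∃ N : ℕ, 0 < N ∧
      ∀ (n : ℕ) (d : Fin m → ℕ) (C : Set (EuclideanSpace ℝ (Fin n)))
        (K : ∀ i : Fin m, Set (EuclideanSpace ℝ (Fin (d i)))),
        IsProperCone C →
        (∀ i, IsClosedConvexCone (K i)) →
        (∀ i, FaceChainBound (K i) (k + 1)) →
        (∃ (π : (∀ i, EuclideanSpace ℝ (Fin (d i))) →ₗ[ℝ] EuclideanSpace ℝ (Fin n))
            (L : Submodule ℝ (∀ i, EuclideanSpace ℝ (Fin (d i)))),
            C = π '' ({x | ∀ i, x i ∈ K i} ∩ (L : Set (∀ i, EuclideanSpace ℝ (Fin (d i))))) ∧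
            ((L : Set (∀ i, EuclideanSpace ℝ (Fin (d i)))) ∩
              intrinsicInterior ℝ {x | ∀ i, x i ∈ K i}).Nonempty) →
        ∀ V : Set (EuclideanSpace ℝ (Fin n)), V.Finite → IsNeighborly C k V →
          V.ncard < N := by
  classical
  obtain ⟨N₀, hRam⟩ := hyperRamsey k (Fin m → Fin (k+2)) (k+1)
  refine ⟨N₀ + 1, Nat.succ_pos _, ?_⟩
  intro n d C K hC hKcc hKcb hlift V hVfin hnbl
  by_contra hcon
  push_neg at hcon
  obtain ⟨π, L, hCeq, hproper⟩ := hlift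
  set Kprod : Set (∀ i : Fin m, EuclideanSpace ℝ (Fin (d i))) := {x | ∀ i, x i ∈ K i}
    with hKprod
  have hKprodcc : IsClosedConvexCone Kprod := by
    refine ⟨?_, ?_, ?_, ?_⟩
    · have hrw : Kprod = ⋂ i, (fun x => x i) ⁻¹' (K i) := by
        ext x; simp [hKprod, Set.mem_iInter]
      rw [hrw]
      exact isClosed_iInter fun i => ((hKcc i).1).preimage (continuous_apply i)
    · intro x hx y hy a b ha hb hab i
      exact (hKcc i).2.1 (hx i) (hy i) ha hb hab
    · intro i; exact (hKcc i).2.2.1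
    · intro x hx t ht i
      exact (hKcc i).2.2.2 _ (hx i) t ht
  -- choose lifts of points of V
  have hpre : ∀ v : EuclideanSpace ℝ (Fin n), ∃ x, v ∈ V →
      (x ∈ Kprod ∧ x ∈ L) ∧ π x = v := by
    intro v
    by_cases hv : v ∈ V
    · have hvC : v ∈ C := (hnbl.1 hv).2.1
      rw [hCeq] at hvC
      obtain ⟨x, hx, hpx⟩ := hvC
      exact ⟨x, fun _ => ⟨⟨hx.1, hx.2⟩, hpx⟩⟩
    · exact ⟨0, fun h => absurd h hv⟩
  choose xv hxv using hpre
  -- the coloring by height tuples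
  set colorOf : Finset (EuclideanSpace ℝ (Fin n)) → (Fin m → Fin (k+2)) := fun W i =>
    ⟨min (height (K i) (minFace (K i) ((fun v => xv v i) '' ↑W))) (k+1), by omega⟩
    with hcolorOf
  set Vf := hVfin.toFinset with hVf
  have hVfcard : N₀ + 1 ≤ Vf.card := by
    rw [hVf]
    rw [← Set.ncard_eq_toFinset_card _ hVfin]
    omega
  set e := Vf.equivFin with he
  set ψ : ℕ → EuclideanSpace ℝ (Fin n) := fun j =>
    if h : j < Vf.card then (e.symm ⟨j, h⟩ : EuclideanSpace ℝ (Fin n)) else 0 with hψ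
  have hψV : ∀ j, j < Vf.card → ψ j ∈ V := by
    intro j hj
    rw [hψ]
    simp only [dif_pos hj]
    have h2 := (e.symm ⟨j, hj⟩).2
    exact (Set.Finite.mem_toFinset hVfin).mp h2
  have hψinj : ∀ j, j < Vf.card → ∀ j', j' < Vf.card → ψ j = ψ j' → j = j' := by
    intro j hj j' hj' hh
    rw [hψ] at hh
    simp only [dif_pos hj, dif_pos hj'] at hh
    have h2 := e.symm.injective (Subtype.coe_injective hh)
    simpa using congrArg Fin.val h2
  -- apply Ramsey
  obtain ⟨B, hBA, hBcard, hBmono⟩ := hRam (fun Wn => colorOf (Wn.image ψ))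
    (Finset.range Vf.card) (by rw [Finset.card_range]; omega)
  obtain ⟨B', hB'B, hB'card⟩ := Finset.exists_subset_card_eq hBcard
  have hB'range : ∀ j ∈ B', j < Vf.card := fun j hj =>
    Finset.mem_range.mp (hBA (hB'B hj))
  have hinjB' : Set.InjOn ψ ↑B' := fun j hj j' hj' hh =>
    hψinj j (hB'range j (Finset.mem_coe.mp hj)) j' (hB'range j' (Finset.mem_coe.mp hj')) hh
  set U := B'.image ψ with hUdef
  have hUcard : U.card = k + 1 := by
    rw [hUdef, Finset.card_image_of_injOn hinjB', hB'card]
  have hUV : ↑U ⊆ V := by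
    intro v hv
    obtain ⟨j, hj, rfl⟩ := Finset.mem_image.mp hv
    exact hψV j (hB'range j hj)
  -- pull back subsets and get color equality on k-subsets of U
  have hpull : ∀ W : Finset (EuclideanSpace ℝ (Fin n)), W ⊆ U →
      ∃ Wn ⊆ B', Wn.image ψ = W ∧ Wn.card = W.card := by
    intro W hWU
    refine ⟨B'.filter (fun j => ψ j ∈ W), Finset.filter_subset _ _, ?_, ?_⟩
    · ext z
      simp only [Finset.mem_image, Finset.mem_filter]
      constructor
      · rintro ⟨j, ⟨hjB, hjW⟩, rfl⟩; exact hjW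
      · intro hz
        obtain ⟨j, hjB, rfl⟩ := Finset.mem_image.mp (hWU hz)
        exact ⟨j, ⟨hjB, hz⟩, rfl⟩
    · rw [← Finset.card_image_of_injOn
        (hinjB'.mono (by
          intro x hx
          simp only [Finset.coe_filter, Set.mem_setOf_eq] at hx
          exact hx.1))]
      congr 1
      ext z
      simp only [Finset.mem_image, Finset.mem_filter]
      constructor
      · rintro ⟨j, ⟨hjB, hjW⟩, rfl⟩; exact hjW
      · intro hz
        obtain ⟨j, hjB, rfl⟩ := Finset.mem_image.mp (hWU hz)
        exact ⟨j, ⟨hjB, hz⟩, rfl⟩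
  have hcolU : ∀ W ⊆ U, W.card = k → ∀ W' ⊆ U, W'.card = k →
      colorOf W = colorOf W' := by
    intro W hW hWc W' hW' hW'c
    obtain ⟨Wn, hWn, hWni, hWnc⟩ := hpull W hW
    obtain ⟨Wn', hWn', hWni', hWnc'⟩ := hpull W' hW'
    have := hBmono Wn (hWn.trans hB'B) (by omega) Wn' (hWn'.trans hB'B) (by omega)
    rwa [hWni, hWni'] at this
  -- heights are equal on k-subsets of U
  have hheq : ∀ i : Fin m, ∀ W ⊆ U, W.card = k → ∀ W' ⊆ U, W'.card = k →
      height (K i) (minFace (K i) ((fun v => xv v i) '' ↑W)) =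
      height (K i) (minFace (K i) ((fun v => xv v i) '' ↑W')) := by
    intro i W hW hWc W' hW' hW'c
    have hcolo := congrFun (hcolU W hW hWc W' hW' hW'c) i
    rw [hcolorOf] at hcolo
    simp only [Fin.mk.injEq] at hcolo
    have hb1 : height (K i) (minFace (K i) ((fun v => xv v i) '' ↑W)) ≤ k + 1 :=
      height_le (hKcb i) _
    have hb2 : height (K i) (minFace (K i) ((fun v => xv v i) '' ↑W')) ≤ k + 1 :=
      height_le (hKcb i) _
    omega
  -- per-coordinate minimal faces of k-subsets equal that of U
  have hy : ∀ i : Fin m, ∀ v ∈ U, xv v i ∈ K i := by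
    intro i v hv
    exact ((hxv v (hUV hv)).1.1) i
  have hfaceEq : ∀ i : Fin m, ∀ W ⊆ U, W.card = k →
      minFace (K i) ((fun v => xv v i) '' ↑W) =
      minFace (K i) ((fun v => xv v i) '' ↑U) := by
    intro i
    exact key_combinatorial (hKcc i) hk (hKcb i) U (fun v => xv v i) (hy i) hUcard
      (hheq i)
  -- pick w and the k-subset W
  have hUne : U.Nonempty := Finset.card_pos.mp (by omega)
  obtain ⟨w, hw⟩ := hUne
  set Wk := U.erase w with hWk
  have hWkcard : Wk.card = k := by rw [hWk, Finset.card_erase_of_mem hw, hUcard]; omega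
  have hWkU : Wk ⊆ U := Finset.erase_subset _ _
  have hWsubV : ↑Wk ⊆ V := fun x hx => hUV (hWkU hx)
  obtain ⟨f, hfdual, hfzero, hfpos⟩ := hnbl.2 ↑Wk hWsubV (Wk.finite_toSet)
    (by rw [Set.ncard_coe_finset, hWkcard])
  -- the lifted functional
  set φ : (∀ i : Fin m, EuclideanSpace ℝ (Fin (d i))) →ₗ[ℝ] ℝ :=
    ((innerSL ℝ f).toLinearMap).comp π with hφdef
  have hφval : ∀ x, φ x = ⟪f, π x⟫ := fun x => rfl
  have hφnn : ∀ x ∈ Kprod ∩ (L : Set (∀ i : Fin m, EuclideanSpace ℝ (Fin (d i)))),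
      0 ≤ φ x := by
    intro x hx
    have hπx : π x ∈ C := by
      rw [hCeq]; exact ⟨x, ⟨hx.1, hx.2⟩, rfl⟩
    exact hfdual (π x) hπx
  obtain ⟨g, hgK, hgL⟩ := cone_functional_extension hKprodcc L φ hφnn hproper
  -- coordinate functionals
  set gi : ∀ i : Fin m, EuclideanSpace ℝ (Fin (d i)) →ₗ[ℝ] ℝ := fun i =>
    g.comp (LinearMap.single ℝ (fun i => EuclideanSpace ℝ (Fin (d i))) i) with hgi
  have hsingle_mem : ∀ (i : Fin m) (z : EuclideanSpace ℝ (Fin (d i))), z ∈ K i →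
      Pi.single i z ∈ Kprod := by
    intro i z hz j
    by_cases hij : j = i
    · subst hij; rw [Pi.single_eq_same]; exact hz
    · rw [Pi.single_eq_of_ne hij]; exact (hKcc j).2.2.1
  have hginn : ∀ (i : Fin m) (z : EuclideanSpace ℝ (Fin (d i))), z ∈ K i → 0 ≤ gi i z := by
    intro i z hz
    exact hgK _ (hsingle_mem i z hz)
  have hgsum : ∀ x : ∀ i : Fin m, EuclideanSpace ℝ (Fin (d i)),
      g x = ∑ i, gi i (x i) := by
    intro x
    calc g x = g (∑ i, Pi.single i (x i)) := by rw [Finset.univ_sum_single]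
    _ = ∑ i, g (Pi.single i (x i)) := map_sum g _ _
    _ = ∑ i, gi i (x i) := by
        refine Finset.sum_congr rfl fun i _ => ?_
        rw [hgi]
        simp [LinearMap.single_apply]
  -- g vanishes coordinatewise on the lifts of Wk
  have hgv0 : ∀ v ∈ Wk, ∀ i : Fin m, gi i (xv v i) = 0 := by
    intro v hv
    have hvV : v ∈ V := hWsubV hv
    have hxvL : xv v ∈ L := (hxv v hvV).1.2
    have hgxv : g (xv v) = 0 := by
      rw [hgL _ hxvL, hφval, (hxv v hvV).2]
      exact hfzero v (by exact_mod_cast hv)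
    have hsum0 : ∑ i, gi i (xv v i) = 0 := by rw [← hgsum]; exact hgxv
    have hnn : ∀ i ∈ Finset.univ, 0 ≤ gi i (xv v i) := fun i _ =>
      hginn i _ ((hxv v hvV).1.1 i)
    intro i
    exact (Finset.sum_eq_zero_iff_of_nonneg hnn).mp hsum0 i (Finset.mem_univ i)
  -- conclude: g vanishes on the lift of w
  have hzero_w : ∀ i : Fin m, gi i (xv w i) = 0 := by
    intro i
    have hZface : IsFace (K i) {z | z ∈ K i ∧ gi i z = 0} :=
      face_zeroSet (hKcc i) (gi i) (fun z hz => hginn i z hz)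
    have hsubZ : minFace (K i) ((fun v => xv v i) '' ↑Wk) ⊆ {z | z ∈ K i ∧ gi i z = 0} := by
      refine minFace_min hZface ?_
      rintro _ ⟨v, hv, rfl⟩
      have hv' : v ∈ Wk := by exact_mod_cast hv
      exact ⟨hy i v (hWkU hv'), hgv0 v hv' i⟩
    have hmemU : xv w i ∈ minFace (K i) ((fun v => xv v i) '' ↑U) :=
      subset_minFace ⟨w, by exact_mod_cast hw, rfl⟩
    rw [← hfaceEq i Wk hWkU hWkcard] at hmemU
    exact (hsubZ hmemU).2
  have hgw : g (xv w) = 0 := by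
    rw [hgsum]
    exact Finset.sum_eq_zero fun i _ => hzero_w i
  have hwV : w ∈ V := hUV hw
  have hfw : ⟪f, w⟫ = 0 := by
    have hxwL : xv w ∈ L := (hxv w hwV).1.2
    rw [← (hxv w hwV).2, ← hφval, ← hgL _ hxwL]
    exact hgw
  have hwpos : 0 < ⟪f, w⟫ := by
    refine hfpos w ⟨hwV, ?_⟩
    intro hcon2
    have : w ∈ Wk := by exact_mod_cast hcon2
    exact Finset.notMem_erase w U this
  rw [hfw] at hwpos
  exact lt_irrefl _ hwpos
end

section
/- For all positive integers k and m there exists a positive integer N (one may take the k-uniform hypergraph Ramsey number R_k(k+1; (k+1)^m)) with the following property: let K_1, …, K_m be closed convex cones with ℓ(K_i) ≤ k+1 for each i ∈ [m], let S be a finite set with |S| ≥ k, and suppose for each i ∈ [m] there are maps a_i : binom(S,k) → K_i* and b_i : S → K_i such that for every k-element subset T ⊆ S and every s ∈ S, Σ_{i=1}^m ⟨a_i(T), b_i(s)⟩ = 0 if and only if s ∈ T. Then |S| < N. -/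
open scoped RealInnerProductSpace

section FaceTheory

variable {E : Type*} [NormedAddCommGroup E] [InnerProductSpace ℝ E] {K : Set E}

lemma isFace_self (h : Convex ℝ K) : IsFace K K :=
  ⟨subset_rfl, h, fun x hx y hy _ _ _ _ => ⟨hx, hy⟩⟩

lemma isFace_sInter {𝒮 : Set (Set E)} (hne : 𝒮.Nonempty) (h : ∀ F ∈ 𝒮, IsFace K F) :
    IsFace K (⋂₀ 𝒮) := by
  obtain ⟨F₀, hF₀⟩ := hne
  refine ⟨(Set.sInter_subset_of_mem hF₀).trans (h F₀ hF₀).1,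
    convex_sInter (fun F hF => (h F hF).2.1), ?_⟩
  intro x hx y hy α hα0 hα1 hz
  constructor
  · exact Set.mem_sInter.2 fun F hF => ((h F hF).2.2 hx hy hα0 hα1 (Set.mem_sInter.1 hz F hF)).1
  · exact Set.mem_sInter.2 fun F hF => ((h F hF).2.2 hx hy hα0 hα1 (Set.mem_sInter.1 hz F hF)).2

/-- The minimal face of `K` containing `X` (and `0`). -/
def faceGen (K X : Set E) : Set E := ⋂₀ {F | IsFace K F ∧ (0:E) ∈ F ∧ X ⊆ F}

variable (hK : IsClosedConvexCone K)

lemma faceGen_isFace (hK : IsClosedConvexCone K) {X : Set E} (hX : X ⊆ K) :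
    IsFace K (faceGen K X) :=
  isFace_sInter ⟨K, isFace_self hK.2.1, hK.2.2.1, hX⟩ (fun _ hF => hF.1)

lemma zero_mem_faceGen {X : Set E} : (0:E) ∈ faceGen K X :=
  Set.mem_sInter.2 fun _ hF => hF.2.1

lemma subset_faceGen {X : Set E} : X ⊆ faceGen K X :=
  fun x hx => Set.mem_sInter.2 fun _ hF => hF.2.2 hx

lemma faceGen_min {X F : Set E} (hF : IsFace K F) (h0 : (0:E) ∈ F) (hXF : X ⊆ F) :
    faceGen K X ⊆ F :=
  Set.sInter_subset_of_mem ⟨hF, h0, hXF⟩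

lemma faceGen_mono {X Y : Set E} (h : X ⊆ Y) : faceGen K X ⊆ faceGen K Y :=
  Set.sInter_subset_sInter (fun F hF => ⟨hF.1, hF.2.1, h.trans hF.2.2⟩)

lemma isFace_perp (hK : IsClosedConvexCone K) {a : E} (ha : a ∈ dualCone K) :
    IsFace K {x | x ∈ K ∧ ⟪a, x⟫ = 0} := by
  refine ⟨fun x hx => hx.1, ?_, ?_⟩
  · intro x hx y hy s t hs ht hst
    refine ⟨hK.2.1 hx.1 hy.1 hs ht hst, ?_⟩
    rw [inner_add_right, real_inner_smul_right, real_inner_smul_right, hx.2, hy.2]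
    ring
  · intro x hx y hy α hα0 hα1 hz
    have hxi := ha x hx
    have hyi := ha y hy
    have hzi : α * ⟪a, x⟫ + (1-α) * ⟪a, y⟫ = 0 := by
      have := hz.2
      rwa [inner_add_right, real_inner_smul_right, real_inner_smul_right] at this
    have h1 : ⟪a, x⟫ = 0 := by nlinarith
    have h2 : ⟪a, y⟫ = 0 := by nlinarith
    exact ⟨⟨hx, h1⟩, ⟨hy, h2⟩⟩

lemma faceGen_subset_perp (hK : IsClosedConvexCone K) {a : E} (ha : a ∈ dualCone K)
    {X : Set E} (hXK : X ⊆ K) (hX0 : ∀ x ∈ X, ⟪a, x⟫ = 0) :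
    faceGen K X ⊆ {x | x ∈ K ∧ ⟪a, x⟫ = 0} := by
  refine faceGen_min (isFace_perp hK ha) ⟨hK.2.2.1, inner_zero_right a⟩ ?_
  exact fun x hx => ⟨hXK hx, hX0 x hx⟩

end FaceTheory

section Rank

variable {E : Type*} [NormedAddCommGroup E] [InnerProductSpace ℝ E] {K : Set E} {kk : ℕ}

/-- A strictly increasing chain of `l+1` nonempty faces ending at `G`. -/
def chainTo (K G : Set E) (l : ℕ) : Prop :=
  ∃ F : Fin (l+1) → Set E, (∀ j, IsFace K (F j) ∧ (F j).Nonempty) ∧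
    (∀ j j' : Fin (l+1), j < j' → F j ⊂ F j') ∧ F (Fin.last l) = G

/-- One less than the length of the longest chain of nonempty faces ending at `G`. -/
noncomputable def rnk (K : Set E) (kk : ℕ) (G : Set E) : ℕ :=
  @Nat.findGreatest (chainTo K G) (Classical.decPred _) kk

lemma chainTo_le {G : Set E} {l : ℕ} (hb : FaceChainBound K (kk+1)) (h : chainTo K G l) :
    l ≤ kk := by
  obtain ⟨F, h1, h2, _⟩ := h
  have := hb (l+1) F h1 h2
  omega

lemma chainTo_zero {G : Set E} (hF : IsFace K G) (hne : G.Nonempty) : chainTo K G 0 := by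
  refine ⟨fun _ => G, fun _ => ⟨hF, hne⟩, ?_, rfl⟩
  intro j j' h
  have h1 := j.isLt
  have h2 := j'.isLt
  have := Fin.lt_def.mp h
  omega

lemma rnk_le (G : Set E) : rnk K kk G ≤ kk := @Nat.findGreatest_le _ (Classical.decPred _) kk

lemma rnk_spec {G : Set E} (hF : IsFace K G) (hne : G.Nonempty) :
    chainTo K G (rnk K kk G) :=
  @Nat.findGreatest_spec 0 _ (Classical.decPred _) kk (Nat.zero_le kk) (chainTo_zero hF hne)

lemma fin_eq_castSucc {n : ℕ} (j : Fin (n+1)) (h : j ≠ Fin.last n) :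
    ∃ j₀ : Fin n, j = j₀.castSucc := by
  have h1 : j.val ≠ n := fun hv => h (Fin.ext hv)
  have h2 : j.val < n := by have := j.isLt; omega
  exact ⟨⟨j.val, h2⟩, Fin.ext rfl⟩

lemma rnk_lt_of_ssubset (hb : FaceChainBound K (kk+1)) {G G' : Set E}
    (hF : IsFace K G) (hne : G.Nonempty) (hF' : IsFace K G') (hne' : G'.Nonempty)
    (hss : G ⊂ G') : rnk K kk G < rnk K kk G' := by
  set l := rnk K kk G with hl
  obtain ⟨F, h1, h2, h3⟩ := rnk_spec (kk := kk) hF hne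
  have hchain : chainTo K G' (l+1) := by
    refine ⟨Fin.snoc F G', ?_, ?_, ?_⟩
    · intro j
      refine Fin.lastCases ?_ ?_ j
      · rw [Fin.snoc_last]; exact ⟨hF', hne'⟩
      · intro j'; rw [Fin.snoc_castSucc]; exact h1 j'
    · intro j j' hlt
      revert hlt
      refine Fin.lastCases ?_ ?_ j'
      · intro hlt
        have hjne : j ≠ Fin.last (l+1) := ne_of_lt hlt
        obtain ⟨j₀, rfl⟩ := fin_eq_castSucc _ hjne
        rw [Fin.snoc_last, Fin.snoc_castSucc]
        have hsub : F j₀ ⊆ G := by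
          rcases eq_or_lt_of_le (Fin.le_last j₀) with h | h
          · rw [← h3, ← h]
          · exact (h3 ▸ h2 j₀ (Fin.last l) h).subset
        exact lt_of_le_of_lt hsub hss
      · intro j₁ hlt
        have hjne : j ≠ Fin.last (l+1) := by
          intro h; rw [h] at hlt
          exact absurd hlt (not_lt.mpr (Fin.le_last _))
        obtain ⟨j₀, rfl⟩ := fin_eq_castSucc _ hjne
        rw [Fin.snoc_castSucc, Fin.snoc_castSucc]
        exact h2 j₀ j₁ (by exact_mod_cast Fin.castSucc_lt_castSucc_iff.mp hlt)
    · rw [Fin.snoc_last]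
  have hle : l + 1 ≤ kk := chainTo_le hb hchain
  exact Nat.lt_of_lt_of_le (Nat.lt_succ_self l)
    (@Nat.le_findGreatest _ _ (Classical.decPred _) _ hle hchain)

lemma rnk_mono (hb : FaceChainBound K (kk+1)) {G G' : Set E}
    (hF : IsFace K G) (hne : G.Nonempty) (hF' : IsFace K G') (hne' : G'.Nonempty)
    (h : G ⊆ G') : rnk K kk G ≤ rnk K kk G' := by
  rcases h.ssubset_or_eq with hss | heq
  · exact (rnk_lt_of_ssubset hb hF hne hF' hne' hss).le
  · rw [heq]

lemma face_eq_of_rnk_le (hb : FaceChainBound K (kk+1)) {G G' : Set E}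
    (hF : IsFace K G) (hne : G.Nonempty) (hF' : IsFace K G') (hne' : G'.Nonempty)
    (h : G ⊆ G') (hle : rnk K kk G' ≤ rnk K kk G) : G = G' := by
  rcases h.ssubset_or_eq with hss | heq
  · exact absurd (rnk_lt_of_ssubset hb hF hne hF' hne' hss) (not_lt.mpr hle)
  · exact heq

end Rank


section Ramsey

/-- `χ` is constant on `r`-element subsets of `U`. -/
def MonoOn {α : Type} (χ : Finset α → ℕ) (r : ℕ) (U : Finset α) : Prop :=
  ∀ T₁ ⊆ U, T₁.card = r → ∀ T₂ ⊆ U, T₂.card = r → χ T₁ = χ T₂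

lemma MonoOn.subset {α : Type} {χ : Finset α → ℕ} {r : ℕ} {U V : Finset α}
    (h : U ⊆ V) (hm : MonoOn χ r V) : MonoOn χ r U :=
  fun T₁ h1 c1 T₂ h2 c2 => hm T₁ (h1.trans h) c1 T₂ (h2.trans h) c2

def RamseyStmt (r c t n : ℕ) : Prop :=
  ∀ (α : Type) [DecidableEq α] (S : Finset α) (χ : Finset α → ℕ), (∀ T, χ T < c) → n ≤ S.card →
    ∃ U, U ⊆ S ∧ U.card = t ∧ MonoOn χ r U

lemma chain_exists (r c : ℕ) (hc : 0 < c) (ih : ∀ t', ∃ n, RamseyStmt r c t' n) :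
    ∀ L : ℕ, ∃ n, ∀ (α : Type) [DecidableEq α] (S : Finset α) (χ : Finset α → ℕ),
      (∀ T, χ T < c) → n ≤ S.card →
      ∃ (x : Fin L → α) (γ : Fin L → ℕ), Function.Injective x ∧ (∀ l, x l ∈ S) ∧
        (∀ l, γ l < c) ∧
        ∀ (l : Fin L) (T : Finset α),
          T ⊆ (Finset.univ.filter fun l' => l < l').image x → T.card = r →
            χ (insert (x l) T) = γ l := by
  intro L
  induction L with
  | zero =>
    refine ⟨0, fun α _ S χ _ _ => ⟨Fin.elim0, Fin.elim0, ?_, ?_, ?_, ?_⟩⟩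
    · intro l; exact l.elim0
    · intro l; exact l.elim0
    · intro l; exact l.elim0
    · intro l; exact l.elim0
  | succ L ihL =>
    classical
    obtain ⟨nL, hL⟩ := ihL
    obtain ⟨nR, hR⟩ := ih nL
    refine ⟨nR + 1, fun α _ S χ hχ hcard => ?_⟩
    have hSne : S.Nonempty := Finset.card_pos.mp (by omega)
    obtain ⟨x₀, hx₀⟩ := hSne
    have hcard' : nR ≤ (S.erase x₀).card := by
      rw [Finset.card_erase_of_mem hx₀]; omega
    obtain ⟨A, hAS, hAcard, hAmono⟩ :=
      hR α (S.erase x₀) (fun T => χ (insert x₀ T)) (fun T => hχ _) hcard'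
    obtain ⟨γ₀, hγ₀c, hγ₀⟩ : ∃ γ₀, γ₀ < c ∧
        ∀ T ⊆ A, T.card = r → χ (insert x₀ T) = γ₀ := by
      by_cases hex : ∃ T, T ⊆ A ∧ T.card = r
      · obtain ⟨T₀, hT₀A, hT₀c⟩ := hex
        exact ⟨χ (insert x₀ T₀), hχ _,
          fun T hTA hTc => hAmono T hTA hTc T₀ hT₀A hT₀c⟩
      · exact ⟨0, hc, fun T hTA hTc => absurd ⟨T, hTA, hTc⟩ hex⟩
    obtain ⟨x', γ', hinj, hmem, hγc, hprop⟩ := hL α A χ hχ (le_of_eq hAcard.symm)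
    refine ⟨Fin.cons x₀ x', Fin.cons γ₀ γ', ?_, ?_, ?_, ?_⟩
    · rw [Fin.cons_injective_iff]
      refine ⟨?_, hinj⟩
      rintro ⟨j, rfl⟩
      exact (Finset.mem_erase.mp (hAS (hmem j))).1 rfl
    · intro l
      refine Fin.cases ?_ ?_ l
      · exact hx₀
      · intro j; exact Finset.mem_of_mem_erase (hAS (hmem j))
    · intro l
      refine Fin.cases ?_ ?_ l
      · exact hγ₀c
      · intro j; exact hγc j
    · intro l
      refine Fin.cases ?_ ?_ l
      · intro T hT hTc
        rw [Fin.cons_zero]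
        have hTA : T ⊆ A := by
          refine hT.trans ?_
          intro y hy
          obtain ⟨l', hl', rfl⟩ := Finset.mem_image.mp hy
          have hl'0 : (0 : Fin (L+1)) < l' := (Finset.mem_filter.mp hl').2
          obtain ⟨j, rfl⟩ := Fin.eq_succ_of_ne_zero (Fin.pos_iff_ne_zero.mp hl'0)
          rw [Fin.cons_succ]
          exact hmem j
        exact hγ₀ T hTA hTc
      · intro j T hT hTc
        rw [Fin.cons_succ]
        refine hprop j T ?_ hTc
        refine hT.trans ?_
        intro y hy
        obtain ⟨l', hl', rfl⟩ := Finset.mem_image.mp hy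
        have hl'j : j.succ < l' := (Finset.mem_filter.mp hl').2
        have hl'0 : l' ≠ 0 := by
          intro h; rw [h] at hl'j
          exact absurd hl'j (by simp [Fin.lt_def])
        obtain ⟨j', rfl⟩ := Fin.eq_succ_of_ne_zero hl'0
        rw [Fin.cons_succ]
        refine Finset.mem_image.mpr ⟨j', ?_, rfl⟩
        refine Finset.mem_filter.mpr ⟨Finset.mem_univ _, ?_⟩
        exact_mod_cast Fin.succ_lt_succ_iff.mp hl'j

lemma ramsey_exists (c : ℕ) (hc : 0 < c) : ∀ r t : ℕ, ∃ n, RamseyStmt r c t n := by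
  intro r
  induction r with
  | zero =>
    intro t
    refine ⟨t, fun α _ S χ _ hcard => ?_⟩
    obtain ⟨U, hUS, hUcard⟩ := Finset.exists_subset_card_eq hcard
    refine ⟨U, hUS, hUcard, ?_⟩
    intro T₁ _ c1 T₂ _ c2
    rw [Finset.card_eq_zero.mp c1, Finset.card_eq_zero.mp c2]
  | succ r ihr =>
    intro t
    classical
    obtain ⟨n, hchain⟩ := chain_exists r c hc (fun t' => ihr t') (c * t)
    refine ⟨n, fun α _ S χ hχ hcard => ?_⟩
    obtain ⟨x, γ, hinj, hmem, hγc, hprop⟩ := hchain α S χ hχ hcard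
    have hmaps : ∀ l ∈ (Finset.univ : Finset (Fin (c * t))), γ l ∈ Finset.range c :=
      fun l _ => Finset.mem_range.mpr (hγc l)
    have hne : (Finset.range c).Nonempty := ⟨0, Finset.mem_range.mpr hc⟩
    have hcount : (Finset.range c).card * t ≤ (Finset.univ : Finset (Fin (c * t))).card := by
      simp [Finset.card_range]
    obtain ⟨γ₀, _, hfib⟩ :=
      Finset.exists_le_card_fiber_of_mul_le_card_of_maps_to hmaps hne hcount
    obtain ⟨I, hIfib, hIcard⟩ := Finset.exists_subset_card_eq hfib
    refine ⟨I.image x, ?_, ?_, ?_⟩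
    · intro y hy
      obtain ⟨l, _, rfl⟩ := Finset.mem_image.mp hy
      exact hmem l
    · rw [Finset.card_image_of_injective _ hinj, hIcard]
    · have key : ∀ T ⊆ I.image x, T.card = r + 1 → χ T = γ₀ := by
        intro T hTU hTc
        obtain ⟨J, hJI, hJim⟩ := Finset.subset_image_iff.mp hTU
        have hJcard : J.card = r + 1 := by
          rw [← hJim] at hTc
          rwa [Finset.card_image_of_injective _ hinj] at hTc
        have hJne : J.Nonempty := Finset.card_pos.mp (by omega)
        set l₀ := J.min' hJne with hl₀
        have hTeq : T = insert (x l₀) ((J.erase l₀).image x) := by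
          rw [← Finset.image_insert, Finset.insert_erase (J.min'_mem hJne), hJim]
        have hsub : (J.erase l₀).image x ⊆
            (Finset.univ.filter fun l' => l₀ < l').image x := by
          refine Finset.image_subset_image ?_
          intro l hl
          refine Finset.mem_filter.mpr ⟨Finset.mem_univ _, ?_⟩
          exact Finset.min'_lt_of_mem_erase_min' J hJne hl
        have hcardE : ((J.erase l₀).image x).card = r := by
          rw [Finset.card_image_of_injective _ hinj,
            Finset.card_erase_of_mem (J.min'_mem hJne), hJcard]
          omega
        have := hprop l₀ ((J.erase l₀).image x) hsub hcardE
        rw [hTeq, this]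
        have hl₀I : l₀ ∈ I := hJI (J.min'_mem hJne)
        exact (Finset.mem_filter.mp (hIfib hl₀I)).2
      intro T₁ h1 c1 T₂ h2 c2
      rw [key T₁ h1 c1, key T₂ h2 c2]

def RamseyMultiStmt (R c t n : ℕ) : Prop :=
  ∀ (α : Type) [DecidableEq α] (S : Finset α) (χ : ℕ → Finset α → ℕ), (∀ j T, χ j T < c) → n ≤ S.card →
    ∃ U, U ⊆ S ∧ U.card = t ∧ ∀ j ≤ R, MonoOn (χ j) j U

lemma ramseyMulti_exists (c : ℕ) (hc : 0 < c) (R t : ℕ) : ∃ n, RamseyMultiStmt R c t n := by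
  induction R with
  | zero =>
    refine ⟨t, fun α _ S χ _ hcard => ?_⟩
    obtain ⟨U, hUS, hUcard⟩ := Finset.exists_subset_card_eq hcard
    refine ⟨U, hUS, hUcard, ?_⟩
    intro j hj T₁ _ c1 T₂ _ c2
    interval_cases j
    rw [Finset.card_eq_zero.mp c1, Finset.card_eq_zero.mp c2]
  | succ R ihR =>
    obtain ⟨n₀, h₀⟩ := ihR
    obtain ⟨n₁, h₁⟩ := ramsey_exists c hc (R+1) n₀
    refine ⟨n₁, fun α _ S χ hχ hcard => ?_⟩
    obtain ⟨U₁, hU₁S, hU₁card, hU₁mono⟩ := h₁ α S (χ (R+1)) (hχ (R+1)) hcard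
    obtain ⟨U, hUU₁, hUcard, hUmono⟩ := h₀ α U₁ χ hχ (le_of_eq hU₁card.symm)
    refine ⟨U, hUU₁.trans hU₁S, hUcard, ?_⟩
    intro j hj
    rcases Nat.lt_or_ge j (R+1) with h | h
    · exact hUmono j (by omega)
    · have : j = R + 1 := by omega
      rw [this]
      exact MonoOn.subset hUU₁ hU₁mono

end Ramsey


section Completeness

variable {E : Type*} [NormedAddCommGroup E] [InnerProductSpace ℝ E]

/-- The minimal face of `K` containing the `bb`-image of a finset. -/
def Gpt (K : Set E) {α : Type} (bb : α → E) (A : Finset α) : Set E :=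
  faceGen K (bb '' (A : Set α))

variable {K : Set E} {α : Type} {bb : α → E} {S : Finset α}

lemma Gpt_isFace (hK : IsClosedConvexCone K) (hb : ∀ s ∈ S, bb s ∈ K)
    {A : Finset α} (hA : A ⊆ S) : IsFace K (Gpt K bb A) := by
  refine faceGen_isFace hK ?_
  rintro x ⟨s, hs, rfl⟩
  exact hb s (hA (Finset.mem_coe.mp hs))

lemma Gpt_nonempty {A : Finset α} : (Gpt K bb A).Nonempty := ⟨0, zero_mem_faceGen⟩

lemma Gpt_mono {A B : Finset α} (h : A ⊆ B) : Gpt K bb A ⊆ Gpt K bb B :=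
  faceGen_mono (Set.image_mono (by exact_mod_cast h))

lemma mem_Gpt {A : Finset α} {s : α} (hs : s ∈ A) : bb s ∈ Gpt K bb A :=
  subset_faceGen (Set.mem_image_of_mem _ (Finset.mem_coe.mpr hs))

lemma completeness {k : ℕ} (hK : IsClosedConvexCone K) (hFCB : FaceChainBound K (k+1))
    (hb : ∀ s ∈ S, bb s ∈ K) {t : ℕ} (ht : k+1 ≤ t) {nR : ℕ}
    (hram : RamseyMultiStmt (k+1) (k+1) t nR) (hcard : nR ≤ S.card) :
    ∃ U, U ⊆ S ∧ U.card = t ∧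
      ∀ T ⊆ U, T.card = k → ∀ s ∈ U, bb s ∈ Gpt K bb T := by
  classical
  obtain ⟨U, hUS, hUt, hmono⟩ := hram α S (fun _ T => rnk K k (Gpt K bb (T ∩ S)))
    (fun _ _ => lt_of_le_of_lt (rnk_le _) (Nat.lt_succ_self k)) hcard
  have hface : ∀ A : Finset α, A ⊆ U → IsFace K (Gpt K bb A) :=
    fun A hA => Gpt_isFace hK hb (hA.trans hUS)
  have hmono' : ∀ j ≤ k+1, ∀ A ⊆ U, A.card = j → ∀ A' ⊆ U, A'.card = j →
      rnk K k (Gpt K bb A) = rnk K k (Gpt K bb A') := by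
    intro j hj A hAU hAc A' hA'U hA'c
    have h := hmono j hj A hAU hAc A' hA'U hA'c
    dsimp only at h
    rwa [Finset.inter_eq_left.mpr (hAU.trans hUS),
      Finset.inter_eq_left.mpr (hA'U.trans hUS)] at h
  obtain ⟨j, hjk, heq⟩ : ∃ j ≤ k, ∀ A ⊆ U, A.card = j → ∀ B ⊆ U, B.card = j+1 →
      rnk K k (Gpt K bb A) = rnk K k (Gpt K bb B) := by
    by_contra hno
    push_neg at hno
    have grow : ∀ j, j ≤ k+1 → ∃ B, B ⊆ U ∧ B.card = j ∧ j ≤ rnk K k (Gpt K bb B) := by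
      intro j
      induction j with
      | zero => exact fun _ => ⟨∅, Finset.empty_subset U, Finset.card_empty, Nat.zero_le _⟩
      | succ j ihj =>
        intro hj1
        obtain ⟨Bj, hBjU, hBjc, hBjr⟩ := ihj (by omega)
        obtain ⟨A, hAU, hAc, B, hBU, hBc, hne⟩ := hno j (by omega)
        obtain ⟨A', hA'B, hA'c⟩ := Finset.exists_subset_card_eq (by omega : j ≤ B.card)
        have e1 : rnk K k (Gpt K bb Bj) = rnk K k (Gpt K bb A) :=
          hmono' j (by omega) Bj hBjU hBjc A hAU hAc
        have e2 : rnk K k (Gpt K bb A) = rnk K k (Gpt K bb A') :=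
          hmono' j (by omega) A hAU hAc A' (hA'B.trans hBU) hA'c
        have e3 : rnk K k (Gpt K bb A') ≤ rnk K k (Gpt K bb B) :=
          rnk_mono hFCB (hface A' (hA'B.trans hBU)) Gpt_nonempty (hface B hBU)
            Gpt_nonempty (Gpt_mono hA'B)
        have : rnk K k (Gpt K bb Bj) < rnk K k (Gpt K bb B) := by
          rw [e1, e2]; exact lt_of_le_of_ne e3 (by rw [← e2]; exact hne)
        exact ⟨B, hBU, hBc, by omega⟩
    obtain ⟨B, _, _, hBr⟩ := grow (k+1) le_rfl
    have := rnk_le (K := K) (kk := k) (Gpt K bb B)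
    omega
  have claimC : ∀ B ⊆ U, B.card = j+1 → ∀ A ⊆ B, A.card = j → Gpt K bb A = Gpt K bb B := by
    intro B hBU hBc A hAB hAc
    refine face_eq_of_rnk_le hFCB (hface A (hAB.trans hBU)) Gpt_nonempty (hface B hBU)
      Gpt_nonempty (Gpt_mono hAB) ?_
    exact le_of_eq (heq A (hAB.trans hBU) hAc B hBU hBc).symm
  have claimD : ∀ p (A A' : Finset α), A ⊆ U → A' ⊆ U → A.card = j → A'.card = j →
      (A' \ A).card = p → Gpt K bb A = Gpt K bb A' := by
    intro p
    induction p with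
    | zero =>
      intro A A' _ _ hAc hA'c hdiff
      have hsub : A' ⊆ A := by
        rw [← Finset.sdiff_eq_empty_iff_subset]
        exact Finset.card_eq_zero.mp hdiff
      rw [Finset.eq_of_subset_of_card_le hsub (by omega)]
    | succ p ihp =>
      intro A A' hAU hA'U hAc hA'c hdiff
      obtain ⟨a', ha'⟩ : (A' \ A).Nonempty := Finset.card_pos.mp (by omega)
      have ha'A' : a' ∈ A' := (Finset.mem_sdiff.mp ha').1
      have ha'A : a' ∉ A := (Finset.mem_sdiff.mp ha').2
      obtain ⟨a, ha⟩ : (A \ A').Nonempty := by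
        have h1 := Finset.card_sdiff_add_card_inter A A'
        have h2 := Finset.card_sdiff_add_card_inter A' A
        rw [Finset.inter_comm] at h2
        exact Finset.card_pos.mp (by omega)
      have haA : a ∈ A := (Finset.mem_sdiff.mp ha).1
      have haA' : a ∉ A' := (Finset.mem_sdiff.mp ha).2
      have hj0 : 0 < j := by rw [← hAc]; exact Finset.card_pos.mpr ⟨a, haA⟩
      have hBU : insert a' A ⊆ U := Finset.insert_subset (hA'U ha'A') hAU
      have hBc : (insert a' A).card = j+1 := by
        rw [Finset.card_insert_of_notMem ha'A, hAc]
      have hA''B : insert a' (A.erase a) ⊆ insert a' A :=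
        Finset.insert_subset_insert _ (Finset.erase_subset _ _)
      have hA''c : (insert a' (A.erase a)).card = j := by
        rw [Finset.card_insert_of_notMem
          (fun h => ha'A (Finset.mem_of_mem_erase h)),
          Finset.card_erase_of_mem haA, hAc]
        omega
      have e1 : Gpt K bb A = Gpt K bb (insert a' A) :=
        claimC _ hBU hBc A (Finset.subset_insert _ _) hAc
      have e2 : Gpt K bb (insert a' (A.erase a)) = Gpt K bb (insert a' A) :=
        claimC _ hBU hBc _ hA''B hA''c
      have hdiff' : (A' \ insert a' (A.erase a)).card = p := by
        have hset : A' \ insert a' (A.erase a) = (A' \ A).erase a' := by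
          ext x
          simp only [Finset.mem_sdiff, Finset.mem_erase, Finset.mem_insert]
          constructor
          · rintro ⟨hxA', hnot⟩
            push_neg at hnot
            refine ⟨hnot.1, hxA', fun hxA => ?_⟩
            by_cases hxa : x = a
            · exact haA' (hxa ▸ hxA')
            · exact hnot.2 hxa hxA
          · rintro ⟨hxa', hxA', hxA⟩
            refine ⟨hxA', ?_⟩
            rintro (rfl | ⟨-, hxA2⟩)
            · exact hxa' rfl
            · exact hxA hxA2
        rw [hset, Finset.card_erase_of_mem ha', hdiff]
        omega
      have e3 : Gpt K bb (insert a' (A.erase a)) = Gpt K bb A' :=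
        ihp _ A' (hA''B.trans hBU) hA'U hA''c hA'c hdiff'
      rw [e1, ← e2, e3]
  refine ⟨U, hUS, hUt, ?_⟩
  intro T hTU hTc s hsU
  obtain ⟨C, hCe, hCc⟩ := Finset.exists_subset_card_eq
    (show j ≤ (U.erase s).card by rw [Finset.card_erase_of_mem hsU, hUt]; omega)
  have hsC : s ∉ C := fun h => (Finset.mem_erase.mp (hCe h)).1 rfl
  have hCU : C ⊆ U := hCe.trans (Finset.erase_subset _ _)
  have hBU : insert s C ⊆ U := Finset.insert_subset hsU hCU
  have hBc : (insert s C).card = j+1 := by rw [Finset.card_insert_of_notMem hsC, hCc]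
  have h1 : bb s ∈ Gpt K bb (insert s C) := mem_Gpt (Finset.mem_insert_self _ _)
  have h2 : Gpt K bb C = Gpt K bb (insert s C) :=
    claimC _ hBU hBc C (Finset.subset_insert _ _) hCc
  obtain ⟨A₀, hA₀T, hA₀c⟩ := Finset.exists_subset_card_eq (show j ≤ T.card by omega)
  have h3 : Gpt K bb C = Gpt K bb A₀ :=
    claimD ((A₀ \ C).card) C A₀ hCU (hA₀T.trans hTU) hCc hA₀c rfl
  have h4 : Gpt K bb A₀ ⊆ Gpt K bb T := Gpt_mono hA₀T
  rw [← h2, h3] at h1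
  exact h4 h1

end Completeness

section Main

/-- The conclusion of statement 2 for given `k`, `m`, bound `N`. -/
def Works (k m N : ℕ) : Prop :=
  ∀ (d : Fin m → ℕ) (K : ∀ i : Fin m, Set (EuclideanSpace ℝ (Fin (d i)))),
    (∀ i, IsClosedConvexCone (K i)) →
    (∀ i, FaceChainBound (K i) (k + 1)) →
    ∀ (α : Type) (S : Finset α)
      (a : ∀ i : Fin m, Finset α → EuclideanSpace ℝ (Fin (d i)))
      (b : ∀ i : Fin m, α → EuclideanSpace ℝ (Fin (d i))),
      k ≤ S.card →
      (∀ i (T : Finset α), T ⊆ S → T.card = k → a i T ∈ dualCone (K i)) →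
      (∀ i s, s ∈ S → b i s ∈ K i) →
      (∀ T : Finset α, T ⊆ S → T.card = k → ∀ s ∈ S,
        ((∑ i : Fin m, ⟪a i T, b i s⟫) = 0 ↔ s ∈ T)) →
      S.card < N

variable {k m : ℕ} {d : Fin m → ℕ} {K : ∀ i : Fin m, Set (EuclideanSpace ℝ (Fin (d i)))}
  {α : Type} {S : Finset α} {a : ∀ i : Fin m, Finset α → EuclideanSpace ℝ (Fin (d i))}
  {b : ∀ i : Fin m, α → EuclideanSpace ℝ (Fin (d i))}

lemma inst_inner_zero
    (hdual : ∀ i (T : Finset α), T ⊆ S → T.card = k → a i T ∈ dualCone (K i))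
    (hbmem : ∀ i s, s ∈ S → b i s ∈ K i)
    (hsum : ∀ T : Finset α, T ⊆ S → T.card = k → ∀ s ∈ S,
      ((∑ i : Fin m, ⟪a i T, b i s⟫) = 0 ↔ s ∈ T))
    {T : Finset α} (hT : T ⊆ S) (hTc : T.card = k) (i : Fin m) {t : α} (ht : t ∈ T) :
    ⟪a i T, b i t⟫ = 0 := by
  have hz : (∑ i : Fin m, ⟪a i T, b i t⟫) = 0 := (hsum T hT hTc t (hT ht)).mpr ht
  have hnn : ∀ i ∈ Finset.univ, (0:ℝ) ≤ ⟪a i T, b i t⟫ :=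
    fun i _ => hdual i T hT hTc _ (hbmem i t (hT ht))
  exact (Finset.sum_eq_zero_iff_of_nonneg hnn).mp hz i (Finset.mem_univ i)

lemma inst_face_perp (hK : ∀ i, IsClosedConvexCone (K i))
    (hdual : ∀ i (T : Finset α), T ⊆ S → T.card = k → a i T ∈ dualCone (K i))
    (hbmem : ∀ i s, s ∈ S → b i s ∈ K i)
    (hsum : ∀ T : Finset α, T ⊆ S → T.card = k → ∀ s ∈ S,
      ((∑ i : Fin m, ⟪a i T, b i s⟫) = 0 ↔ s ∈ T))
    {T : Finset α} (hT : T ⊆ S) (hTc : T.card = k) (i : Fin m) :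
    Gpt (K i) (b i) T ⊆ {x | x ∈ K i ∧ ⟪a i T, x⟫ = 0} := by
  refine faceGen_subset_perp (hK i) (hdual i T hT hTc) ?_ ?_
  · rintro x ⟨t, htm, rfl⟩
    exact hbmem i t (hT (Finset.mem_coe.mp htm))
  · rintro x ⟨t, htm, rfl⟩
    exact inst_inner_zero hdual hbmem hsum hT hTc i (Finset.mem_coe.mp htm)

lemma inst_exists_not_mem (hK : ∀ i, IsClosedConvexCone (K i))
    (hdual : ∀ i (T : Finset α), T ⊆ S → T.card = k → a i T ∈ dualCone (K i))
    (hbmem : ∀ i s, s ∈ S → b i s ∈ K i)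
    (hsum : ∀ T : Finset α, T ⊆ S → T.card = k → ∀ s ∈ S,
      ((∑ i : Fin m, ⟪a i T, b i s⟫) = 0 ↔ s ∈ T))
    (hS : k+1 ≤ S.card) {A : Finset α} (hA : A ⊆ S) (hAc : A.card ≤ k)
    {s : α} (hs : s ∈ S) (hsA : s ∉ A) :
    ∃ i, b i s ∉ Gpt (K i) (b i) A := by
  classical
  by_contra hall
  push_neg at hall
  have hAe : A ⊆ S.erase s :=
    fun x hx => Finset.mem_erase.mpr ⟨fun h => hsA (h ▸ hx), hA hx⟩
  obtain ⟨T, hAT, hTe, hTcc⟩ := Finset.exists_subsuperset_card_eq (n := k - A.card + A.card) hAe (by omega)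
    (by rw [Finset.card_erase_of_mem hs]; omega)
  have hTc : T.card = k := by rw [hTcc]; omega
  have hTS : T ⊆ S := hTe.trans (Finset.erase_subset _ _)
  have hzero : ∀ i, ⟪a i T, b i s⟫ = 0 := fun i =>
    (inst_face_perp hK hdual hbmem hsum hTS hTc i (Gpt_mono hAT (hall i))).2
  have hsT : s ∈ T := (hsum T hTS hTc s hs).mp (Finset.sum_eq_zero fun i _ => hzero i)
  exact (Finset.mem_erase.mp (hTe hsT)).1 rfl

lemma works_base (k : ℕ) : Works k 1 (k+1) := by
  intro d K hK hFCB α S a b hcard hdual hbmem hsum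
  by_contra hlt
  push_neg at hlt
  classical
  have grow : ∀ j, j ≤ k+1 → ∃ A, A ⊆ S ∧ A.card = j ∧
      j ≤ rnk (K 0) k (Gpt (K 0) (b 0) A) := by
    intro j
    induction j with
    | zero => exact fun _ => ⟨∅, Finset.empty_subset S, Finset.card_empty, Nat.zero_le _⟩
    | succ j ihj =>
      intro hj1
      obtain ⟨A, hAS, hAc, hAr⟩ := ihj (by omega)
      obtain ⟨s, hsmem⟩ : (S \ A).Nonempty := by
        refine Finset.sdiff_nonempty.mpr (fun hSA => ?_)
        have := Finset.card_le_card hSA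
        omega
      have hsS : s ∈ S := (Finset.mem_sdiff.mp hsmem).1
      have hsA : s ∉ A := (Finset.mem_sdiff.mp hsmem).2
      obtain ⟨i, hi⟩ := inst_exists_not_mem hK hdual hbmem hsum hlt hAS (by omega) hsS hsA
      have hi0 : b 0 s ∉ Gpt (K 0) (b 0) A := by
        have hieq : i = 0 := Subsingleton.elim i 0
        rwa [hieq] at hi
      have hss : Gpt (K 0) (b 0) A ⊂ Gpt (K 0) (b 0) (insert s A) := by
        refine (Set.ssubset_iff_of_subset (Gpt_mono (Finset.subset_insert s A))).mpr ?_
        exact ⟨b 0 s, mem_Gpt (Finset.mem_insert_self _ _), hi0⟩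
      have hlt' : rnk (K 0) k (Gpt (K 0) (b 0) A) <
          rnk (K 0) k (Gpt (K 0) (b 0) (insert s A)) := by
        refine rnk_lt_of_ssubset (hFCB 0) ?_ Gpt_nonempty ?_ Gpt_nonempty hss
        · exact Gpt_isFace (hK 0) (fun u hu => hbmem 0 u hu) hAS
        · exact Gpt_isFace (hK 0) (fun u hu => hbmem 0 u hu)
            (Finset.insert_subset hsS hAS)
      refine ⟨insert s A, Finset.insert_subset hsS hAS, ?_, by omega⟩
      rw [Finset.card_insert_of_notMem hsA, hAc]
  obtain ⟨A, _, _, hAr⟩ := grow (k+1) le_rfl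
  have := rnk_le (K := K 0) (kk := k) (Gpt (K 0) (b 0) A)
  omega

lemma works_step (k m : ℕ) (N' : ℕ) (hN' : k+1 ≤ N') (hW : Works k m N') :
    ∃ N, k+1 ≤ N ∧ Works k (m+1) N := by
  obtain ⟨nR, hram⟩ := ramseyMulti_exists (k+1) (by omega) (k+1) N'
  refine ⟨max nR (k+1), le_max_right _ _, ?_⟩
  intro d K hK hFCB α S a b hcard hdual hbmem hsum
  classical
  by_contra hlt
  push_neg at hlt
  have hcard' : nR ≤ S.card := (le_max_left _ _).trans hlt
  obtain ⟨U, hUS, hUt, hcomp⟩ := completeness (hK (Fin.last m)) (hFCB (Fin.last m))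
    (fun s hs => hbmem (Fin.last m) s hs) hN' hram hcard'
  have hsum' : ∀ T : Finset α, T ⊆ U → T.card = k → ∀ s ∈ U,
      ((∑ i : Fin m, ⟪a i.castSucc T, b i.castSucc s⟫) = 0 ↔ s ∈ T) := by
    intro T hTU hTc s hsU
    have hTS : T ⊆ S := hTU.trans hUS
    have hsS : s ∈ S := hUS hsU
    have hlast : ⟪a (Fin.last m) T, b (Fin.last m) s⟫ = 0 :=
      (inst_face_perp hK hdual hbmem hsum hTS hTc (Fin.last m) (hcomp T hTU hTc s hsU)).2
    have hfull := hsum T hTS hTc s hsS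
    rw [Fin.sum_univ_castSucc, hlast, add_zero] at hfull
    exact hfull
  have happ := hW (fun i => d i.castSucc) (fun i => K i.castSucc)
    (fun i => hK i.castSucc) (fun i => hFCB i.castSucc) α U
    (fun i => a i.castSucc) (fun i => b i.castSucc)
    (by omega) (fun i T hT hTc => hdual i.castSucc T (hT.trans hUS) hTc)
    (fun i s hs => hbmem i.castSucc s (hUS hs)) hsum'
  omega

lemma works_main (k : ℕ) : ∀ m, 0 < m → ∃ N, k+1 ≤ N ∧ Works k m N := by
  intro m
  induction m with
  | zero => omega
  | succ m ihm =>
    intro _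
    rcases Nat.eq_zero_or_pos m with rfl | hm
    · exact ⟨k+1, le_rfl, works_base k⟩
    · obtain ⟨N', hN', hW⟩ := ihm hm
      exact works_step k m N' hN' hW

end Main

/-- (Generalization of Averkov's main lemma.) For all positive integers `k`
and `m` there is a positive integer `N` (e.g. the Ramsey number `R_k(k+1; (k+1)^m)`) such that:
if `K₁, …, Kₘ` are closed convex cones with `ℓ(Kᵢ) ≤ k + 1`, `S` is a finite set with `|S| ≥ k`,
and for each `i` there are maps `aᵢ : binom(S,k) → Kᵢ*` and `bᵢ : S → Kᵢ` with
`Σᵢ ⟨aᵢ(T), bᵢ(s)⟩ = 0 ↔ s ∈ T`, then `|S| < N`. -/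
theorem statement_2 (k m : ℕ) (hk : 0 < k) (hm : 0 < m) :
    ∃ N : ℕ, 0 < N ∧
      ∀ (d : Fin m → ℕ) (K : ∀ i : Fin m, Set (EuclideanSpace ℝ (Fin (d i)))),
        (∀ i, IsClosedConvexCone (K i)) →
        (∀ i, FaceChainBound (K i) (k + 1)) →
        ∀ (α : Type) (S : Finset α)
          (a : ∀ i : Fin m, Finset α → EuclideanSpace ℝ (Fin (d i)))
          (b : ∀ i : Fin m, α → EuclideanSpace ℝ (Fin (d i))),
          k ≤ S.card →
          (∀ i (T : Finset α), T ⊆ S → T.card = k → a i T ∈ dualCone (K i)) →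
          (∀ i s, s ∈ S → b i s ∈ K i) →
          (∀ T : Finset α, T ⊆ S → T.card = k → ∀ s ∈ S,
            ((∑ i : Fin m, ⟪a i T, b i s⟫) = 0 ↔ s ∈ T)) →
          S.card < N := by
  obtain ⟨N, hN1, hN2⟩ := works_main k m hm
  exact ⟨N, by omega, hN2⟩
end

section
/- For all positive integers k and m there exists a positive integer N (one may take the k-uniform hypergraph Ramsey number R_k(k+1; (k+1)^m)) with the following property: let S be a finite set with |S| ≥ k, and suppose for each i ∈ [m] there are maps a_i : binom(S,k) → S₊^k and b_i : S → S₊^k (into the cone of k×k real symmetric positive semidefinite matrices) such that for every k-element subset T ⊆ S and every s ∈ S, Σ_{i=1}^m ⟨a_i(T), b_i(s)⟩ = 0 if and only if s ∈ T (where ⟨A,B⟩ = tr(AB)). Then |S| < N. -/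
open Finset Matrix Module

section AverkovAux


def EndHom {β : Type} (k : ℕ) (χ : Finset ℕ → β) (A P : Finset ℕ) : Prop :=
  ∀ Q : Finset ℕ, Q ⊆ A → Q.card = k →
    ∀ y ∈ A ∪ P, ∀ z ∈ A ∪ P, (∀ q ∈ Q, q < y) → (∀ q ∈ Q, q < z) →
      χ (insert y Q) = χ (insert z Q)

lemma refine_lemma {β : Type} [Fintype β] [DecidableEq β] [Nonempty β]
    (P : Finset ℕ) (f : ℕ → β) (L : ℕ)
    (h : Fintype.card β * L ≤ P.card) : ∃ v, L ≤ (P.filter (fun x => f x = v)).card := by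
  obtain ⟨v, _, hv⟩ := Finset.exists_le_card_fiber_of_mul_le_card_of_maps_to
    (s := P) (t := Finset.univ) (f := f) (fun x _ => Finset.mem_univ _) Finset.univ_nonempty
    (by simpa using h)
  exact ⟨v, hv⟩

lemma build (k : ℕ) {β : Type} [Fintype β] [DecidableEq β] [Nonempty β] :
    ∀ (t L : ℕ), ∃ M : ℕ, ∀ (χ : Finset ℕ → β) (S : Finset ℕ), M ≤ S.card →
      ∃ A P : Finset ℕ, A ⊆ S ∧ P ⊆ S ∧ (∀ a ∈ A, ∀ p ∈ P, a < p) ∧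
        A.card = t ∧ L ≤ P.card ∧ EndHom k χ A P := by
  intro t
  induction t with
  | zero =>
    intro L
    by_cases hk : k = 0
    · subst hk
      refine ⟨Fintype.card β * L, fun χ S hS => ?_⟩
      obtain ⟨v, hv⟩ := refine_lemma S (fun x => χ {x}) L hS
      refine ⟨∅, S.filter (fun x => χ {x} = v), empty_subset _, filter_subset _ _,
        by simp, rfl, hv, ?_⟩
      intro Q hQ _ y hy z hz _ _
      have hQe : Q = ∅ := subset_empty.mp hQ
      subst hQe
      simp only [empty_union, mem_filter] at hy hz
      rw [show insert y (∅ : Finset ℕ) = {y} from rfl, show insert z (∅ : Finset ℕ) = {z} from rfl,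
        hy.2, hz.2]
    · refine ⟨L, fun χ S hS => ?_⟩
      refine ⟨∅, S, empty_subset _, Subset.rfl, by simp, rfl, hS, ?_⟩
      intro Q hQ hQc
      exact absurd (subset_empty.mp hQ ▸ hQc).symm (by simpa using hk)
  | succ t ih =>
    intro L
    obtain ⟨M, hM⟩ := ih ((L+1) * (Fintype.card β ^ ((t+1).choose k)) + 1)
    refine ⟨M, fun χ S hS => ?_⟩
    obtain ⟨A, P, hAS, hPS, hAP, hAc, hPc, hEH⟩ := hM χ S hS
    have hcard1 : 0 < Fintype.card β ^ ((t+1).choose k) := pow_pos Fintype.card_pos _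
    have hPne : P.Nonempty := card_pos.mp (by nlinarith)
    set a := P.min' hPne with ha
    have haP : a ∈ P := P.min'_mem hPne
    have haA : a ∉ A := fun h => lt_irrefl a (hAP a h a haP)
    set A' := insert a A with hA'
    have hA'c : A'.card = t + 1 := by rw [hA', card_insert_of_notMem haA, hAc]
    set PC := A'.powersetCard k with hPC
    have hcardfun : Fintype.card (↑PC → β) = Fintype.card β ^ ((t+1).choose k) := by
      rw [Fintype.card_fun, Fintype.card_coe, hPC, card_powersetCard, hA'c]
    obtain ⟨v, hv⟩ := refine_lemma (P.erase a) (fun x (Q : ↑PC) => χ (insert x Q.1)) L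
      (by rw [hcardfun, card_erase_of_mem haP]
          refine Nat.le_pred_of_lt (lt_of_lt_of_le ?_ hPc)
          have : Fintype.card β ^ ((t+1).choose k) * L ≤ (L+1) * (Fintype.card β ^ ((t+1).choose k)) := by nlinarith
          omega)
    set P' := (P.erase a).filter (fun x => (fun (Q : ↑PC) => χ (insert x Q.1)) = v) with hP'
    have hP'P : P' ⊆ P := (filter_subset _ _).trans (erase_subset _ _)
    have hP'a : ∀ p ∈ P', a < p := by
      intro p hp
      have hpe := (mem_filter.mp hp).1
      exact lt_of_le_of_ne (P.min'_le p (mem_of_mem_erase hpe)) (Ne.symm (mem_erase.mp hpe).1)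
    refine ⟨A', P', insert_subset (hPS haP) hAS, hP'P.trans hPS, ?_, hA'c, hv, ?_⟩
    · intro x hx p hp
      rcases mem_insert.mp hx with rfl | hxA
      · exact hP'a p hp
      · exact hAP x hxA p (hP'P hp)
    · intro Q hQA' hQc y hy z hz hQy hQz
      by_cases haQ : a ∈ Q
      · have hmem : ∀ w ∈ A' ∪ P', (∀ q ∈ Q, q < w) → w ∈ P' := by
          intro w hw hQw
          rcases mem_union.mp hw with h | h
          · rcases mem_insert.mp h with rfl | h2
            · exact absurd (hQw a haQ) (lt_irrefl _)
            · exact absurd (hQw a haQ) (not_lt.mpr (le_of_lt (hAP w h2 a haP)))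
          · exact h
        have hyP := hmem y hy hQy
        have hzP := hmem z hz hQz
        have hQPC : Q ∈ PC := mem_powersetCard.mpr ⟨hQA', hQc⟩
        have hyv := (mem_filter.mp hyP).2
        have hzv := (mem_filter.mp hzP).2
        have := congrFun hyv ⟨Q, hQPC⟩
        have h2 := congrFun hzv ⟨Q, hQPC⟩
        simp only at this h2
        rw [this, h2]
      · have hQA : Q ⊆ A := by
          intro q hq
          rcases mem_insert.mp (hQA' hq) with rfl | h
          · exact absurd hq haQ
          · exact h
        have hsub : A' ∪ P' ⊆ A ∪ P := by
          intro w hw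
          rcases mem_union.mp hw with h | h
          · rcases mem_insert.mp h with rfl | h2
            · exact mem_union_right _ haP
            · exact mem_union_left _ h2
          · exact mem_union_right _ (hP'P h)
        exact hEH Q hQA hQc y (hsub hy) z (hsub hz) hQy hQz

lemma ramsey (k : ℕ) {β : Type} [Fintype β] [DecidableEq β] [Nonempty β] :
    ∃ N : ℕ, ∀ (χ : Finset ℕ → β) (S : Finset ℕ), N ≤ S.card →
      ∃ Z : Finset ℕ, Z ⊆ S ∧ Z.card = k + 1 ∧ ∃ v, ∀ T ⊆ Z, T.card = k → χ T = v := by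
  induction k with
  | zero =>
    refine ⟨1, fun χ S hS => ?_⟩
    obtain ⟨s, hs⟩ := card_pos.mp hS
    refine ⟨{s}, singleton_subset_iff.mpr hs, rfl, χ ∅, ?_⟩
    intro T hT hTc
    rw [card_eq_zero.mp hTc]
  | succ k ihk =>
    obtain ⟨Nk, hNk⟩ := ihk
    obtain ⟨M, hM⟩ := build k Nk 1 (β := β)
    refine ⟨M, fun χ S hS => ?_⟩
    obtain ⟨A, P, hAS, hPS, hAP, hAc, hPc, hEH⟩ := hM χ S hS
    obtain ⟨x, hx⟩ := card_pos.mp hPc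
    obtain ⟨Z', hZ'A, hZ'c, v, hv⟩ := hNk (fun Q => χ (insert x Q)) A (le_of_eq hAc.symm)
    have hxZ' : x ∉ Z' := fun h => lt_irrefl x (hAP x (hZ'A h) x hx)
    refine ⟨insert x Z', insert_subset (hPS hx) (hZ'A.trans hAS),
      by rw [card_insert_of_notMem hxZ', hZ'c], v, ?_⟩
    intro T hT hTc
    by_cases hxT : x ∈ T
    · have hQ : T.erase x ⊆ Z' := by
        intro q hq
        rcases mem_insert.mp (hT (mem_of_mem_erase hq)) with rfl | h
        · exact absurd rfl (mem_erase.mp hq).1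
        · exact h
      have h1 : χ T = χ (insert x (T.erase x)) := by rw [insert_erase hxT]
      rw [h1]
      exact hv _ hQ (by rw [card_erase_of_mem hxT, hTc]; rfl)
    · have hTZ' : T ⊆ Z' := by
        intro q hq
        rcases mem_insert.mp (hT hq) with rfl | h
        · exact absurd hq hxT
        · exact h
      have hTeq : T = Z' := Finset.eq_of_subset_of_card_le hTZ' (by omega)
      subst hTeq
      have hTne : T.Nonempty := card_pos.mp (by omega)
      set q₀ := T.max' hTne with hq₀
      have hq₀T : q₀ ∈ T := T.max'_mem hTne
      set Q := T.erase q₀ with hQdef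
      have hQT : Q ⊆ T := erase_subset _ _
      have hQA : Q ⊆ A := hQT.trans hZ'A
      have hQc : Q.card = k := by rw [hQdef, card_erase_of_mem hq₀T, hTc]; omega
      have key := hEH Q hQA hQc q₀ (mem_union_left _ (hZ'A hq₀T)) x (mem_union_right _ hx)
        (fun q hq => lt_of_le_of_ne (T.le_max' q (mem_of_mem_erase hq)) (mem_erase.mp hq).1)
        (fun q hq => hAP q (hQA hq) x hx)
      rw [insert_erase hq₀T] at key
      rw [key]
      exact hv Q (hQT) hQc


lemma trace_form (n : ℕ) (M : Matrix (Fin n) (Fin n) ℝ) : (M * Mᴴ).trace = ∑ i, ∑ j, (M i j)^2 := by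
  simp [Matrix.trace, Matrix.mul_apply, Matrix.diag, sq]

lemma psd_trace_mul (n : ℕ) (A B : Matrix (Fin n) (Fin n) ℝ)
    (hA : A.PosSemidef) (hB : B.PosSemidef) :
    0 ≤ (A * B).trace ∧ ((A * B).trace = 0 → A * B = 0) := by
  obtain ⟨P, rfl⟩ : ∃ P : Matrix (Fin n) (Fin n) ℝ, A = Pᴴ * P := by
    open scoped MatrixOrder in exact CStarAlgebra.nonneg_iff_eq_star_mul_self.mp hA.nonneg
  obtain ⟨Q, rfl⟩ : ∃ Q : Matrix (Fin n) (Fin n) ℝ, B = Qᴴ * Q := by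
    open scoped MatrixOrder in exact CStarAlgebra.nonneg_iff_eq_star_mul_self.mp hB.nonneg
  set M := P * Qᴴ with hM
  have key : (Pᴴ * P * (Qᴴ * Q)).trace = (M * Mᴴ).trace := by
    have hMH : Mᴴ = Q * Pᴴ := by
      rw [hM, Matrix.conjTranspose_mul, Matrix.conjTranspose_conjTranspose]
    rw [hMH, hM]
    rw [show Pᴴ * P * (Qᴴ * Q) = Pᴴ * (P * Qᴴ * Q) by noncomm_ring]
    rw [Matrix.trace_mul_comm (Pᴴ)]
    rw [show P * Qᴴ * Q * Pᴴ = P * Qᴴ * (Q * Pᴴ) by noncomm_ring]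
  constructor
  · rw [key, trace_form]; positivity
  · intro h
    rw [key, trace_form] at h
    have hM0 : M = 0 := by
      ext i j
      have h1 := (Finset.sum_eq_zero_iff_of_nonneg (fun i _ => by positivity)).mp h i (mem_univ i)
      have h2 := (Finset.sum_eq_zero_iff_of_nonneg (fun j _ => by positivity)).mp h1 j (mem_univ j)
      simpa using pow_eq_zero_iff (n := 2) (by norm_num) |>.mp h2
    have : Pᴴ * P * (Qᴴ * Q) = Pᴴ * M * Q := by rw [hM]; noncomm_ring
    rw [this, hM0, Matrix.mul_zero, Matrix.zero_mul]

lemma chain_lemma {k : ℕ} (u : ℕ → Submodule ℝ (Fin k → ℝ)) :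
    ∀ (Z : Finset ℕ), (∀ z ∈ Z, ¬ u z ≤ ⨆ y ∈ Z.erase z, u y) →
      Z.card ≤ finrank ℝ ↥(⨆ z ∈ Z, u z) := by
  intro Z
  induction Z using Finset.strongInduction with
  | _ Z ih =>
    intro h
    rcases Z.eq_empty_or_nonempty with rfl | ⟨z, hz⟩
    · simp
    · have hZ0 : (Z.erase z) ⊂ Z := Finset.erase_ssubset hz
      have h0 : ∀ y ∈ Z.erase z, ¬ u y ≤ ⨆ x ∈ (Z.erase z).erase y, u x := by
        intro y hy hle
        refine h y (Finset.mem_of_mem_erase hy) (hle.trans ?_)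
        refine biSup_mono (fun x hx => ?_)
        exact Finset.erase_subset_erase _ (Finset.erase_subset _ _) hx
      have IH := ih _ hZ0 h0
      have hle : (⨆ x ∈ Z.erase z, u x) ≤ ⨆ x ∈ Z, u x :=
        biSup_mono (fun x hx => Finset.mem_of_mem_erase hx)
      have hlt : (⨆ x ∈ Z.erase z, u x) < ⨆ x ∈ Z, u x := by
        refine lt_of_le_of_ne hle ?_
        intro heq
        exact h z hz (heq ▸ le_biSup u hz)
      have hfr := Submodule.finrank_lt_finrank_of_lt hlt
      have hcard : Z.card = (Z.erase z).card + 1 := by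
        rw [Finset.card_erase_of_mem hz]
        have := Finset.card_pos.mpr ⟨z, hz⟩
        omega
      omega

theorem main_test (k m : ℕ) (hk : 0 < k) (hm : 0 < m)
    (N₀ : ℕ)
    (hram : ∀ (χ : Finset ℕ → (Fin m → Fin (k+1))) (S : Finset ℕ), N₀ ≤ S.card →
      ∃ Z : Finset ℕ, Z ⊆ S ∧ Z.card = k + 1 ∧ ∃ v, ∀ T ⊆ Z, T.card = k → χ T = v) :
      ∀ (α : Type) (S : Finset α)
        (a : Fin m → Finset α → Matrix (Fin k) (Fin k) ℝ)
        (b : Fin m → α → Matrix (Fin k) (Fin k) ℝ),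
        k ≤ S.card →
        (∀ i (T : Finset α), T ⊆ S → T.card = k → (a i T).PosSemidef) →
        (∀ i s, s ∈ S → (b i s).PosSemidef) →
        (∀ T : Finset α, T ⊆ S → T.card = k → ∀ s ∈ S,
          ((∑ i : Fin m, (a i T * b i s).trace) = 0 ↔ s ∈ T)) →
        S.card < N₀ + k + 2 := by
  intro α S a b hkS hapsd hbpsd hcond
  by_contra hge
  push_neg at hge
  set n := S.card with hn
  have hn0 : 0 < n := by omega
  classical
  let e : ↥S ≃ Fin n := Fintype.equivFinOfCardEq (Fintype.card_coe S)
  let g : ℕ → α := fun x => if h : x < n then (e.symm ⟨x, h⟩ : α) else (e.symm ⟨0, hn0⟩ : α)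
  have hgS : ∀ x, g x ∈ S := by
    intro x
    by_cases h : x < n <;> simp [g, h, Finset.coe_mem]
  have hginj : ∀ x y, x < n → y < n → g x = g y → x = y := by
    intro x y hx hy hxy
    simp only [g, dif_pos hx, dif_pos hy] at hxy
    have := e.symm.injective (Subtype.ext hxy)
    simpa using this
  let u : Fin m → ℕ → Submodule ℝ (Fin k → ℝ) := fun i x =>
    LinearMap.range (Matrix.toLin' (b i (g x)))
  let W : Fin m → Finset ℕ → Submodule ℝ (Fin k → ℝ) := fun i X => ⨆ x ∈ X, u i x
  have hWle : ∀ i X, finrank ℝ ↥(W i X) ≤ k :=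
    fun i X => (Submodule.finrank_le _).trans_eq (Module.finrank_fin_fun ℝ)
  let χ : Finset ℕ → (Fin m → Fin (k+1)) := fun X i =>
    ⟨min k (finrank ℝ ↥(W i X)), by omega⟩
  obtain ⟨Z, hZR, hZc, v, hv⟩ := hram χ (Finset.range n) (by rw [card_range]; omega)
  have hZn : ∀ x ∈ Z, x < n := fun x hx => mem_range.mp (hZR hx)
  -- key fact H1
  have H1 : ∀ T' ⊆ Z, T'.card = k → ∀ x ∈ Z, x ∉ T' → ∃ i, ¬ u i x ≤ W i T' := by
    intro T' hT'Z hT'c x hxZ hxT'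
    by_contra hall
    push_neg at hall
    set T : Finset α := T'.image g with hT
    have hTc : T.card = k := by
      rw [hT, card_image_of_injOn, hT'c]
      intro p hp q hq hpq
      exact hginj p q (hZn p (hT'Z hp)) (hZn q (hT'Z hq)) hpq
    have hTS : T ⊆ S := by
      intro t ht
      obtain ⟨p, _, rfl⟩ := mem_image.mp ht
      exact hgS p
    have hsS : g x ∈ S := hgS x
    have hsT : g x ∉ T := by
      intro hmem
      obtain ⟨p, hp, hpq⟩ := mem_image.mp hmem
      exact hxT' ((hginj p x (hZn p (hT'Z hp)) (hZn x hxZ) hpq) ▸ hp)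
    -- each summand vanishes
    have hker : ∀ i, W i T' ≤ LinearMap.ker (Matrix.toLin' (a i T)) := by
      intro i
      refine iSup_le (fun t => iSup_le (fun ht => ?_))
      have htS : g t ∈ S := hgS t
      have htT : g t ∈ T := mem_image_of_mem _ ht
      have hsum0 : (∑ j : Fin m, (a j T * b j (g t)).trace) = 0 :=
        (hcond T hTS hTc (g t) htS).mpr htT
      have hterm0 : (a i T * b i (g t)).trace = 0 := by
        refine (Finset.sum_eq_zero_iff_of_nonneg (fun j _ => ?_)).mp hsum0 i (mem_univ i)
        exact (psd_trace_mul k _ _ (hapsd j T hTS hTc) (hbpsd j _ htS)).1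
      have hprod0 : a i T * b i (g t) = 0 :=
        (psd_trace_mul k _ _ (hapsd i T hTS hTc) (hbpsd i _ htS)).2 hterm0
      refine LinearMap.range_le_ker_iff.mpr ?_
      rw [← Matrix.toLin'_mul, hprod0]
      exact map_zero _
    have hzero : ∀ i : Fin m, (a i T * b i (g x)).trace = 0 := by
      intro i
      have hrk : LinearMap.range (Matrix.toLin' (b i (g x))) ≤
          LinearMap.ker (Matrix.toLin' (a i T)) := (hall i).trans (hker i)
      have hcomp := LinearMap.range_le_ker_iff.mp hrk
      rw [← Matrix.toLin'_mul] at hcomp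
      have : a i T * b i (g x) = 0 := by
        have := Matrix.toLin'.injective (hcomp.trans (map_zero Matrix.toLin').symm)
        exact this
      rw [this, Matrix.trace_zero]
    have : g x ∈ T := (hcond T hTS hTc (g x) hsS).mp (by rw [Finset.sum_congr rfl (fun i _ => hzero i)]; simp)
    exact hsT this
  -- color values
  have Hcol : ∀ T' ⊆ Z, T'.card = k → ∀ i, finrank ℝ ↥(W i T') = (v i : ℕ) := by
    intro T' hT'Z hT'c i
    have := congrFun (hv T' hT'Z hT'c) i
    have h2 : min k (finrank ℝ ↥(W i T')) = (v i : ℕ) := congrArg Fin.val this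
    rw [min_eq_right (hWle i T')] at h2
    exact h2
  -- Z is nonempty
  have hZne : Z.Nonempty := card_pos.mp (by omega)
  obtain ⟨z₀, hz₀⟩ := hZne
  have herase : ∀ z ∈ Z, (Z.erase z) ⊆ Z ∧ (Z.erase z).card = k := by
    intro z hz
    exact ⟨erase_subset _ _, by rw [card_erase_of_mem hz, hZc]; omega⟩
  obtain ⟨i, hi⟩ := H1 (Z.erase z₀) (herase z₀ hz₀).1 (herase z₀ hz₀).2 z₀ hz₀ (notMem_erase _ _)
  have hallz : ∀ z ∈ Z, ¬ u i z ≤ W i (Z.erase z) := by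
    intro z hz hle
    have hWZ : W i Z = W i (Z.erase z) := by
      refine le_antisymm ?_ (biSup_mono (fun x hx => mem_of_mem_erase hx))
      refine iSup_le (fun x => iSup_le (fun hx => ?_))
      by_cases hxz : x = z
      · exact hxz ▸ hle
      · exact le_biSup (u i) (mem_erase.mpr ⟨hxz, hx⟩)
    have h1 : finrank ℝ ↥(W i Z) = (v i : ℕ) := by
      rw [hWZ]; exact Hcol _ (herase z hz).1 (herase z hz).2 i
    have hlt : W i (Z.erase z₀) < W i Z := by
      refine lt_of_le_of_ne (biSup_mono (fun x hx => mem_of_mem_erase hx)) ?_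
      intro heq
      exact hi (heq ▸ le_biSup (u i) hz₀)
    have := Submodule.finrank_lt_finrank_of_lt hlt
    rw [h1, Hcol _ (herase z₀ hz₀).1 (herase z₀ hz₀).2 i] at this
    omega
  have := chain_lemma (u i) Z hallz
  have hWZk : finrank ℝ ↥(⨆ z ∈ Z, u i z) ≤ k := hWle i Z
  omega

end AverkovAux

/-- (Averkov's main lemma.) For all positive integers `k` and `m` there is a
positive integer `N` (e.g. the Ramsey number `R_k(k+1; (k+1)^m)`) such that: if `S` is a finite
set with `|S| ≥ k` and for each `i ∈ [m]` there are maps `aᵢ : binom(S,k) → S₊ᵏ` and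
`bᵢ : S → S₊ᵏ` with `Σᵢ tr(aᵢ(T) bᵢ(s)) = 0 ↔ s ∈ T`, then `|S| < N`. -/
theorem statement_3 (k m : ℕ) (hk : 0 < k) (hm : 0 < m) :
    ∃ N : ℕ, 0 < N ∧
      ∀ (α : Type) (S : Finset α)
        (a : Fin m → Finset α → Matrix (Fin k) (Fin k) ℝ)
        (b : Fin m → α → Matrix (Fin k) (Fin k) ℝ),
        k ≤ S.card →
        (∀ i (T : Finset α), T ⊆ S → T.card = k → (a i T).PosSemidef) →
        (∀ i s, s ∈ S → (b i s).PosSemidef) →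
        (∀ T : Finset α, T ⊆ S → T.card = k → ∀ s ∈ S,
          ((∑ i : Fin m, (a i T * b i s).trace) = 0 ↔ s ∈ T)) →
        S.card < N := by
  obtain ⟨N₀, hram⟩ := ramsey k (β := Fin m → Fin (k+1))
  exact ⟨N₀ + k + 2, by omega,
    fun α S a b h1 h2 h3 h4 => main_test k m hk hm N₀ hram α S a b h1 h2 h3 h4⟩
end

section
/- If a proper convex cone C ⊆ ℝ^n has a proper (K_1 × ⋯ × K_m)-lift, where K_1, …, K_m are closed convex cones, then for each i = 1, …, m there exist maps a_i : C* → K_i* and b_i : C → K_i such that ⟨x, y⟩ = Σ_{i=1}^m ⟨b_i(x), a_i(y)⟩ for all x ∈ C and y ∈ C*. -/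
open scoped RealInnerProductSpace

lemma aux_add_mem {E : Type*} [AddCommGroup E] [Module ℝ E] [TopologicalSpace E]
    {K : Set E} (h : IsClosedConvexCone K) {a b : E} (ha : a ∈ K) (hb : b ∈ K) :
    a + b ∈ K := by
  have h2 := h.2.1 ha hb (by norm_num : (0:ℝ) ≤ 1/2) (by norm_num : (0:ℝ) ≤ 1/2)
    (by norm_num : (1:ℝ)/2 + 1/2 = 1)
  have h3 := h.2.2.2 _ h2 2 (by norm_num)
  have : (2:ℝ) • ((1/2 : ℝ) • a + (1/2 : ℝ) • b) = a + b := by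
    rw [smul_add, smul_smul, smul_smul]; norm_num
  rwa [this] at h3

lemma aux_relint {V : Type*} [AddCommGroup V] [Module ℝ V] [TopologicalSpace V]
    [IsTopologicalAddGroup V] [ContinuousSMul ℝ V] {K : Set V} {x0 u : V}
    (hx0 : x0 ∈ intrinsicInterior ℝ K) (hu : u ∈ Submodule.span ℝ K) (h0 : (0:V) ∈ K) :
    ∃ t : ℝ, 0 < t ∧ x0 + t • u ∈ K := by
  obtain ⟨p, hp, hpx⟩ := mem_intrinsicInterior.mp hx0
  have hud : u ∈ (affineSpan ℝ K).direction := by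
    rw [direction_affineSpan]
    refine Submodule.span_le.mpr (fun x hx => ?_) hu
    simpa using vsub_mem_vectorSpan ℝ hx h0
  have hmem : ∀ t : ℝ, (t • u) + x0 ∈ affineSpan ℝ K := by
    intro t
    have := AffineSubspace.vadd_mem_of_mem_direction
      (Submodule.smul_mem _ t hud) (hpx ▸ p.2 : x0 ∈ affineSpan ℝ K)
    simpa using this
  let c : ℝ → (affineSpan ℝ K : Set V) := fun t => ⟨(t • u) + x0, hmem t⟩
  have hc : Continuous c := by
    apply Continuous.subtype_mk
    exact (continuous_id.smul continuous_const).add continuous_const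
  have hc0 : c 0 = p := by
    apply Subtype.ext
    simp [c, hpx]
  have hopen : IsOpen (c ⁻¹' interior (((↑) : affineSpan ℝ K → V) ⁻¹' K)) :=
    isOpen_interior.preimage hc
  have h0mem : (0:ℝ) ∈ c ⁻¹' interior (((↑) : affineSpan ℝ K → V) ⁻¹' K) := by
    simp only [Set.mem_preimage, hc0]; exact hp
  obtain ⟨ε, hε, hball⟩ := Metric.isOpen_iff.mp hopen 0 h0mem
  refine ⟨ε/2, by positivity, ?_⟩
  have : c (ε/2) ∈ interior (((↑) : affineSpan ℝ K → V) ⁻¹' K) := by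
    apply hball
    simp only [Metric.mem_ball, Real.dist_eq, sub_zero]
    rw [abs_of_pos (by positivity)]
    exact half_lt_self hε
  have := interior_subset this
  simpa [c, add_comm] using this

/-- (Factorization theorem.) If a proper convex cone `C ⊆ ℝⁿ` has a proper
`K₁ × ⋯ × Kₘ`-lift, then there are maps `aᵢ : C* → Kᵢ*` and `bᵢ : C → Kᵢ` such that
`⟨x, y⟩ = Σᵢ ⟨bᵢ(x), aᵢ(y)⟩` for all `x ∈ C`, `y ∈ C*`. -/
theorem statement_6 {n m : ℕ} (hm : 0 < m) (d : Fin m → ℕ)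
    (C : Set (EuclideanSpace ℝ (Fin n))) (hC : IsProperCone C)
    (K : ∀ i : Fin m, Set (EuclideanSpace ℝ (Fin (d i))))
    (hK : ∀ i, IsClosedConvexCone (K i))
    (hlift : ∃ (π : (∀ i, EuclideanSpace ℝ (Fin (d i))) →ₗ[ℝ] EuclideanSpace ℝ (Fin n))
        (L : Submodule ℝ (∀ i, EuclideanSpace ℝ (Fin (d i)))),
        C = π '' ({x | ∀ i, x i ∈ K i} ∩ (L : Set (∀ i, EuclideanSpace ℝ (Fin (d i))))) ∧
        ((L : Set (∀ i, EuclideanSpace ℝ (Fin (d i)))) ∩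
          intrinsicInterior ℝ {x | ∀ i, x i ∈ K i}).Nonempty) :
    ∃ (a : ∀ i : Fin m, EuclideanSpace ℝ (Fin n) → EuclideanSpace ℝ (Fin (d i)))
      (b : ∀ i : Fin m, EuclideanSpace ℝ (Fin n) → EuclideanSpace ℝ (Fin (d i))),
      (∀ i, ∀ y ∈ dualCone C, a i y ∈ dualCone (K i)) ∧
      (∀ i, ∀ x ∈ C, b i x ∈ K i) ∧
      ∀ x ∈ C, ∀ y ∈ dualCone C, ⟪x, y⟫ = ∑ i : Fin m, ⟪b i x, a i y⟫ := by
  classical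
  obtain ⟨π, L, hCeq, x0, hx0L, hx0i⟩ := hlift
  set Kset : Set (∀ i, EuclideanSpace ℝ (Fin (d i))) := {x | ∀ i, x i ∈ K i} with hKset
  have h0K : (0 : ∀ i, EuclideanSpace ℝ (Fin (d i))) ∈ Kset := fun i => (hK i).2.2.1
  have haddK : ∀ a ∈ Kset, ∀ b ∈ Kset, a + b ∈ Kset := fun a ha b hb i =>
    aux_add_mem (hK i) (ha i) (hb i)
  have hsmulK : ∀ a ∈ Kset, ∀ t : ℝ, 0 ≤ t → t • a ∈ Kset := fun a ha t ht i =>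
    (hK i).2.2.2 _ (ha i) t ht
  set W : Submodule ℝ (∀ i, EuclideanSpace ℝ (Fin (d i))) := Submodule.span ℝ Kset ⊔ L with hW
  have hKW : Kset ⊆ (W : Set (∀ i, EuclideanSpace ℝ (Fin (d i)))) := fun x hx => le_sup_left (α := Submodule ℝ (∀ i, EuclideanSpace ℝ (Fin (d i))))
    (Submodule.subset_span hx)
  have hLW : L ≤ W := le_sup_right
  have hx0K : x0 ∈ Kset := intrinsicInterior_subset hx0i
  -- the cone inside W
  set s : ConvexCone ℝ W :=
    { carrier := {w : W | (w : ∀ i, EuclideanSpace ℝ (Fin (d i))) ∈ Kset}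
      smul_mem' := by
        intro c hc w hw
        simpa using hsmulK _ hw c hc.le
      add_mem' := by
        intro a ha b hb
        exact haddK _ ha _ hb } with hs
  have key : ∀ y ∈ dualCone C, ∃ k : ∀ i, EuclideanSpace ℝ (Fin (d i)), (∀ i, k i ∈ dualCone (K i)) ∧
      ∀ w ∈ (L : Set (∀ i, EuclideanSpace ℝ (Fin (d i)))), (∑ i, ⟪k i, w i⟫) = ⟪y, π w⟫ := by
    intro y hy
    set L' : Submodule ℝ W := L.comap W.subtype with hL'
    set φ : W →ₗ[ℝ] ℝ := (innerSL ℝ y).toLinearMap.comp (π.comp W.subtype) with hφ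
    set f : (W : Type _) →ₗ.[ℝ] ℝ := ⟨L', φ.comp L'.subtype⟩ with hf
    have hnonneg : ∀ x : f.domain, (x : W) ∈ s → 0 ≤ f x := by
      intro x hx
      have hmem : π ((x : W) : ∀ i, EuclideanSpace ℝ (Fin (d i))) ∈ C := by
        rw [hCeq]
        exact ⟨((x : W) : ∀ i, EuclideanSpace ℝ (Fin (d i))), ⟨hx, x.2⟩, rfl⟩
      exact hy _ hmem
    have hdense : ∀ w : W, ∃ x : f.domain, (x : W) + w ∈ s := by
      intro w
      obtain ⟨u, hu, v, hv, huv⟩ := Submodule.mem_sup.mp w.2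
      obtain ⟨t, ht, htm⟩ := aux_relint hx0i hu h0K
      have hxL : t⁻¹ • x0 - v ∈ L := L.sub_mem (L.smul_mem _ hx0L) hv
      refine ⟨⟨⟨t⁻¹ • x0 - v, hLW hxL⟩, hxL⟩, ?_⟩
      have : (t⁻¹ • x0 - v) + (w : ∀ i, EuclideanSpace ℝ (Fin (d i))) ∈ Kset := by
        have : (t⁻¹ • x0 - v) + (w : ∀ i, EuclideanSpace ℝ (Fin (d i))) = t⁻¹ • (x0 + t • u) := by
          rw [← huv, smul_add, smul_smul, inv_mul_cancel₀ ht.ne', one_smul]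
          abel
        rw [this]
        exact hsmulK _ htm _ (by positivity)
      exact this
    obtain ⟨g, hgf, hgs⟩ := riesz_extension (s.toPointedCone (show s.Pointed from h0K)) f hnonneg hdense
    obtain ⟨W', hW'⟩ := Submodule.exists_isCompl W
    set pr := W.projectionOnto W' hW' with hpr
    set g' : (∀ i, EuclideanSpace ℝ (Fin (d i))) →ₗ[ℝ] ℝ := g.comp pr with hg'
    have hg'W : ∀ (w : ∀ i, EuclideanSpace ℝ (Fin (d i))) (hw : w ∈ W), g' w = g ⟨w, hw⟩ := by
      intro w hw
      have : pr w = ⟨w, hw⟩ := Submodule.projectionOnto_apply_left hW' ⟨w, hw⟩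
      simp [hg', this]
    set k : (∀ i, EuclideanSpace ℝ (Fin (d i))) := fun i => (InnerProductSpace.toDual ℝ (EuclideanSpace ℝ (Fin (d i)))).symm
      (LinearMap.toContinuousLinearMap (g'.comp (LinearMap.single ℝ (fun j => EuclideanSpace ℝ (Fin (d j))) i))) with hk
    have hkz : ∀ (i) (z : EuclideanSpace ℝ (Fin (d i))), ⟪k i, z⟫ = g' (Pi.single i z) := by
      intro i z
      rw [hk, InnerProductSpace.toDual_symm_apply]
      rfl
    have hsingle : ∀ (i) (z : EuclideanSpace ℝ (Fin (d i))), z ∈ K i →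
        (Pi.single i z : ∀ j, EuclideanSpace ℝ (Fin (d j))) ∈ Kset := by
      intro i z hz j
      rcases eq_or_ne j i with rfl | hj
      · simpa using hz
      · rw [Pi.single_eq_of_ne hj]
        exact (hK j).2.2.1
    refine ⟨k, ?_, ?_⟩
    · intro i z hz
      rw [hkz]
      have hmem : (Pi.single i z : ∀ j, EuclideanSpace ℝ (Fin (d j))) ∈ Kset := hsingle i z hz
      rw [hg'W _ (hKW hmem)]
      exact hgs _ hmem
    · intro w hw
      have hsum : (∑ i, ⟪k i, w i⟫) = g' w := by
        simp_rw [hkz]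
        rw [← map_sum]
        congr 1
        exact Finset.univ_sum_single w
      rw [hsum, hg'W _ (hLW hw)]
      have := hgf ⟨⟨w, hLW hw⟩, hw⟩
      rw [this]
      rfl
  have wit : ∀ x ∈ C, ∃ w : ∀ i, EuclideanSpace ℝ (Fin (d i)), w ∈ Kset ∧ w ∈ L ∧ π w = x := by
    intro x hx
    rw [hCeq] at hx
    obtain ⟨w, ⟨hw1, hw2⟩, hw3⟩ := hx
    exact ⟨w, hw1, hw2, hw3⟩
  refine ⟨fun i y => if h : y ∈ dualCone C then (key y h).choose i else 0,
    fun i x => if h : x ∈ C then (wit x h).choose i else 0, ?_, ?_, ?_⟩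
  · intro i y hy
    simp only [dif_pos hy]
    exact (key y hy).choose_spec.1 i
  · intro i x hx
    simp only [dif_pos hx]
    exact (wit x hx).choose_spec.1 i
  · intro x hx y hy
    simp only [dif_pos hx, dif_pos hy]
    obtain ⟨hw1, hw2, hw3⟩ := (wit x hx).choose_spec
    obtain ⟨-, hk2⟩ := (key y hy).choose_spec
    have := hk2 _ hw2
    rw [hw3] at this
    rw [real_inner_comm, ← this]
    exact Finset.sum_congr rfl fun i _ => real_inner_comm _ _
end

section
/- Suppose C ⊆ ℝ^n is a proper convex cone and there exist a positive integer m and closed convex cones K̃_1, …, K̃_m such that C has a (K̃_1 × ⋯ × K̃_m)-lift and ℓ(K̃_i) ≤ k+1 for all i ∈ [m]. Then there exist a positive integer m' and closed convex cones K_1, …, K_{m'} such that C has a proper (K_1 × ⋯ × K_{m'})-lift and ℓ(K_i) ≤ k+1 for all i ∈ [m']. -/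
open scoped RealInnerProductSpace

open Set Filter Topology

variable {E : Type*} [NormedAddCommGroup E] [NormedSpace ℝ E]

/-- Neighborhood characterization of the intrinsic interior. -/
theorem mem_intrinsicInterior_iff_nhds {s : Set E} {z : E} :
    z ∈ intrinsicInterior ℝ s ↔
      z ∈ affineSpan ℝ s ∧ ∃ U ∈ 𝓝 z, U ∩ (affineSpan ℝ s : Set E) ⊆ s := by
  constructor
  · rintro hz
    rw [mem_intrinsicInterior] at hz
    obtain ⟨y, hy, rfl⟩ := hz
    refine ⟨y.2, ?_⟩
    rw [mem_interior_iff_mem_nhds, nhds_subtype, Filter.mem_comap] at hy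
    obtain ⟨U, hU, hsub⟩ := hy
    refine ⟨U, hU, ?_⟩
    rintro x ⟨hxU, hxA⟩
    exact hsub (show (⟨x, hxA⟩ : affineSpan ℝ s) ∈ _ from hxU)
  · rintro ⟨hzA, U, hU, hsub⟩
    rw [mem_intrinsicInterior]
    refine ⟨⟨z, hzA⟩, ?_, rfl⟩
    rw [mem_interior_iff_mem_nhds, nhds_subtype, Filter.mem_comap]
    exact ⟨U, hU, fun a ha => hsub ⟨ha, a.2⟩⟩

/-- From an intrinsic interior point, one can extend past it within the set. -/
theorem exists_extension_of_mem_intrinsicInterior {s : Set E} {z w : E}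
    (hz : z ∈ intrinsicInterior ℝ s) (hw : w ∈ s) :
    ∃ t : ℝ, 0 < t ∧ z + t • (z - w) ∈ s := by
  obtain ⟨hzA, U, hU, hsub⟩ := mem_intrinsicInterior_iff_nhds.mp hz
  have hcont : Continuous fun t : ℝ => z + t • (z - w) := by continuity
  have h0 : (fun t : ℝ => z + t • (z - w)) ⁻¹' U ∈ 𝓝 (0 : ℝ) := by
    apply hcont.continuousAt.preimage_mem_nhds
    simpa using hU
  obtain ⟨ε, hε, hball⟩ := Metric.mem_nhds_iff.mp h0
  refine ⟨ε / 2, by positivity, ?_⟩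
  have hmem : z + (ε / 2) • (z - w) ∈ U := by
    apply hball
    simp only [Metric.mem_ball, Real.dist_eq, sub_zero]
    rw [abs_of_pos (by positivity)]
    linarith
  have hA : z + (ε / 2) • (z - w) ∈ (affineSpan ℝ s : Set E) := by
    have := AffineSubspace.smul_vsub_vadd_mem (affineSpan ℝ s) (ε / 2)
      hzA (subset_affineSpan ℝ s hw) hzA
    simpa [vsub_eq_sub, vadd_eq_add, add_comm] using this
  exact hsub ⟨hmem, hA⟩

/-- A point of a convex set past which every point of the set can be extended is in the
intrinsic interior. -/
theorem mem_intrinsicInterior_of_extension [FiniteDimensional ℝ E] {F : Set E} {z : E}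
    (hconv : Convex ℝ F) (hz : z ∈ F)
    (hext : ∀ y ∈ F, ∃ t : ℝ, 0 < t ∧ z + t • (z - y) ∈ F) :
    z ∈ intrinsicInterior ℝ F := by
  obtain ⟨u, hu⟩ := Set.Nonempty.intrinsicInterior hconv ⟨z, hz⟩
  obtain ⟨huA, U₀, hU₀, hsub₀⟩ := mem_intrinsicInterior_iff_nhds.mp hu
  have huF : u ∈ F := intrinsicInterior_subset hu
  obtain ⟨ε, hε, hp⟩ := hext u huF
  set p : E := z + ε • (z - u) with hp_def
  set c : ℝ := ε / (1 + ε) with hc_def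
  have h1ε : (0:ℝ) < 1 + ε := by linarith
  have hc : c ≠ 0 := by positivity
  have hc_pos : 0 < c := by positivity
  set b : E := (1 / (1 + ε)) • p with hb_def
  have hzcb : c • u + b = z := by
    rw [hb_def, hp_def, hc_def]
    match_scalars <;> field_simp <;> ring
  set h : E ≃ₜ E := (Homeomorph.smulOfNeZero c hc).trans (Homeomorph.addRight b) with hh
  have hhu : h u = z := by simpa [hh, Homeomorph.trans_apply] using hzcb
  rw [mem_intrinsicInterior_iff_nhds]
  refine ⟨subset_affineSpan ℝ F hz, h '' U₀, ?_, ?_⟩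
  · have := h.isOpenMap.image_mem_nhds hU₀
    rwa [hhu] at this
  · rintro y ⟨⟨x, hxU, rfl⟩, hyA⟩
    have hxval : h x = c • x + b := rfl
    have hxA : x ∈ (affineSpan ℝ F : Set E) := by
      have hpA : p ∈ (affineSpan ℝ F : Set E) := subset_affineSpan ℝ F hp
      have key : (1 / c) • (h x -ᵥ p) +ᵥ p ∈ affineSpan ℝ F :=
        AffineSubspace.smul_vsub_vadd_mem _ (1 / c) hyA hpA hpA
      have : (1 / c) • (h x -ᵥ p) +ᵥ p = x := by
        rw [hxval, vsub_eq_sub, vadd_eq_add, hb_def]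
        have : c • x + (1 / (1 + ε)) • p - p = c • x - c • p := by
          rw [hc_def]; match_scalars <;> field_simp <;> ring
        rw [this, smul_sub, smul_smul, smul_smul, one_div, inv_mul_cancel₀ hc,
          one_smul, one_smul]
        exact sub_add_cancel x p
      rwa [this] at key
    have hxF : x ∈ F := hsub₀ ⟨hxU, hxA⟩
    have : h x = c • x + (1 / (1 + ε)) • p := rfl
    rw [this]
    apply hconv hxF hp hc_pos.le (by positivity)
    rw [hc_def]; field_simp; ring

section ConeFacts

variable {V : Type*} [AddCommGroup V] [Module ℝ V]

theorem ccc_add_mem {K : Set V} (hconv : Convex ℝ K)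
    (hsmul : ∀ x ∈ K, ∀ t : ℝ, 0 ≤ t → t • x ∈ K) {a b : V}
    (ha : a ∈ K) (hb : b ∈ K) : a + b ∈ K := by
  have h : (1/2 : ℝ) • a + (1/2 : ℝ) • b ∈ K := hconv ha hb (by norm_num) (by norm_num) (by norm_num)
  have := hsmul _ h 2 (by norm_num)
  have heq : (2:ℝ) • ((1/2 : ℝ) • a + (1/2 : ℝ) • b) = a + b := by
    rw [smul_add, smul_smul, smul_smul]; norm_num
  rwa [heq] at this

theorem IsFace.trans' {K F F' : Set V} (h1 : IsFace K F) (h2 : IsFace F F') : IsFace K F' := by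
  obtain ⟨hFK, _, hface1⟩ := h1
  obtain ⟨hF'F, hconv, hface2⟩ := h2
  refine ⟨hF'F.trans hFK, hconv, ?_⟩
  intro x hx y hy α hα hα1 hmem
  obtain ⟨hxF, hyF⟩ := hface1 hx hy hα hα1 (hF'F hmem)
  exact hface2 hxF hyF hα hα1 hmem

theorem FaceChainBound.of_face {K G : Set V} {m : ℕ} (hG : IsFace K G)
    (hK : FaceChainBound K m) : FaceChainBound G m := by
  intro l F hF hchain
  exact hK l F (fun i => ⟨(hG.trans' (hF i).1), (hF i).2⟩) hchain

end ConeFacts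


/-- If a proper convex cone `C` has a `K̃₁ × ⋯ × K̃ₘ`-lift with
`ℓ(K̃ᵢ) ≤ k + 1` for all `i`, then it has a *proper* `K₁ × ⋯ × K_{m'}`-lift for some closed
convex cones `K₁, …, K_{m'}` with `ℓ(Kᵢ) ≤ k + 1` for all `i`. -/
theorem statement_7 {n k m : ℕ} (hm : 0 < m) (d : Fin m → ℕ)
    (C : Set (EuclideanSpace ℝ (Fin n))) (hC : IsProperCone C)
    (Kt : ∀ i : Fin m, Set (EuclideanSpace ℝ (Fin (d i))))
    (hKt : ∀ i, IsClosedConvexCone (Kt i))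
    (hKtl : ∀ i, FaceChainBound (Kt i) (k + 1))
    (hlift : ∃ (π : (∀ i, EuclideanSpace ℝ (Fin (d i))) →ₗ[ℝ] EuclideanSpace ℝ (Fin n))
        (L : Submodule ℝ (∀ i, EuclideanSpace ℝ (Fin (d i)))),
        C = π '' ({x | ∀ i, x i ∈ Kt i} ∩ (L : Set (∀ i, EuclideanSpace ℝ (Fin (d i)))))) :
    ∃ (m' : ℕ), 0 < m' ∧ ∃ (d' : Fin m' → ℕ)
      (K : ∀ i : Fin m', Set (EuclideanSpace ℝ (Fin (d' i)))),
      (∀ i, IsClosedConvexCone (K i)) ∧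
      (∀ i, FaceChainBound (K i) (k + 1)) ∧
      ∃ (π' : (∀ i, EuclideanSpace ℝ (Fin (d' i))) →ₗ[ℝ] EuclideanSpace ℝ (Fin n))
        (L' : Submodule ℝ (∀ i, EuclideanSpace ℝ (Fin (d' i)))),
        C = π' '' ({x | ∀ i, x i ∈ K i} ∩ (L' : Set (∀ i, EuclideanSpace ℝ (Fin (d' i))))) ∧
        ((L' : Set (∀ i, EuclideanSpace ℝ (Fin (d' i)))) ∩
          intrinsicInterior ℝ {x | ∀ i, x i ∈ K i}).Nonempty := by
  classical
  obtain ⟨π, L, hCeq⟩ := hlift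
  set Kset : Set (∀ i, EuclideanSpace ℝ (Fin (d i))) := {x | ∀ i, x i ∈ Kt i} with hKset
  set S : Set (∀ i, EuclideanSpace ℝ (Fin (d i))) := Kset ∩ L with hS
  have hKsetconv : Convex ℝ Kset := by
    intro x hx y hy a b ha hb hab i
    exact (hKt i).2.1 (hx i) (hy i) ha hb hab
  have hconvS : Convex ℝ S := hKsetconv.inter L.convex
  have h0S : (0 : ∀ i, EuclideanSpace ℝ (Fin (d i))) ∈ S :=
    ⟨fun i => (hKt i).2.2.1, L.zero_mem⟩
  obtain ⟨z, hz⟩ := Set.Nonempty.intrinsicInterior hconvS ⟨0, h0S⟩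
  have hzS : z ∈ S := intrinsicInterior_subset hz
  -- the face generated by `z`, componentwise
  set G : ∀ i : Fin m, Set (EuclideanSpace ℝ (Fin (d i))) :=
    fun i => {y | y ∈ Kt i ∧ ∃ μ : ℝ, 0 ≤ μ ∧ μ • z i - y ∈ Kt i} with hG
  have hGsub : ∀ i, G i ⊆ Kt i := fun i y hy => hy.1
  have h0G : ∀ i, (0 : EuclideanSpace ℝ (Fin (d i))) ∈ G i :=
    fun i => ⟨(hKt i).2.2.1, 0, le_refl _, by simpa using (hKt i).2.2.1⟩
  have hzG : ∀ i, z i ∈ G i :=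
    fun i => ⟨hzS.1 i, 1, zero_le_one, by simpa using (hKt i).2.2.1⟩
  have hGconv : ∀ i, Convex ℝ (G i) := by
    intro i x hx y hy a b ha hb hab
    obtain ⟨hxK, μ₁, hμ₁, hμ₁K⟩ := hx
    obtain ⟨hyK, μ₂, hμ₂, hμ₂K⟩ := hy
    refine ⟨(hKt i).2.1 hxK hyK ha hb hab, a * μ₁ + b * μ₂, by positivity, ?_⟩
    have heq : (a * μ₁ + b * μ₂) • z i - (a • x + b • y)
        = a • (μ₁ • z i - x) + b • (μ₂ • z i - y) := by module
    rw [heq]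
    exact (hKt i).2.1 hμ₁K hμ₂K ha hb hab
  have hGsmul : ∀ i, ∀ y ∈ G i, ∀ t : ℝ, 0 ≤ t → t • y ∈ G i := by
    intro i y hy t ht
    obtain ⟨hyK, μ, hμ, hμK⟩ := hy
    refine ⟨(hKt i).2.2.2 y hyK t ht, t * μ, by positivity, ?_⟩
    have heq : (t * μ) • z i - t • y = t • (μ • z i - y) := by module
    rw [heq]
    exact (hKt i).2.2.2 _ hμK t ht
  -- `G i` is a face of `Kt i`
  have haux : ∀ i, ∀ x ∈ Kt i, ∀ y ∈ Kt i, ∀ α : ℝ, 0 < α → α < 1 →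
      (α • x + (1 - α) • y ∈ G i) → x ∈ G i := by
    intro i x hx y hy α hα hα1 hmem
    obtain ⟨-, μ, hμ, hμK⟩ := hmem
    refine ⟨hx, μ / α, by positivity, ?_⟩
    have heq : (μ / α) • z i - x
        = (1/α) • (μ • z i - (α • x + (1 - α) • y)) + ((1 - α)/α) • y := by
      match_scalars <;> field_simp <;> ring
    rw [heq]
    exact ccc_add_mem (hKt i).2.1 (hKt i).2.2.2
      ((hKt i).2.2.2 _ hμK _ (by positivity))
      ((hKt i).2.2.2 _ hy _ (div_nonneg (by linarith) hα.le))
  have hGface : ∀ i, IsFace (Kt i) (G i) := by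
    intro i
    refine ⟨hGsub i, hGconv i, ?_⟩
    intro x hx y hy α hα hα1 hmem
    refine ⟨haux i x hx y hy α hα hα1 hmem, ?_⟩
    apply haux i y hy x hx (1 - α) (by linarith) (by linarith)
    have heq : (1 - α) • y + (1 - (1 - α)) • x = α • x + (1 - α) • y := by module
    rwa [heq]
  -- `G i` is closed
  have hGadd : ∀ i, ∀ a ∈ G i, ∀ b ∈ G i, a + b ∈ G i :=
    fun i a ha b hb => ccc_add_mem (hGconv i) (hGsmul i) ha hb
  have hGclosed : ∀ i, IsClosed (G i) := by
    intro i
    set M : Submodule ℝ (EuclideanSpace ℝ (Fin (d i))) :=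
      { carrier := {v | ∃ a ∈ G i, ∃ b ∈ G i, v = a - b}
        zero_mem' := ⟨0, h0G i, 0, h0G i, by simp⟩
        add_mem' := by
          rintro u v ⟨a, ha, b, hb, rfl⟩ ⟨a', ha', b', hb', rfl⟩
          exact ⟨a + a', hGadd i a ha a' ha', b + b', hGadd i b hb b' hb', by abel⟩
        smul_mem' := by
          rintro c v ⟨a, ha, b, hb, rfl⟩
          rcases le_or_gt 0 c with hc | hc
          · exact ⟨c • a, hGsmul i a ha c hc, c • b, hGsmul i b hb c hc, by module⟩
          · exact ⟨(-c) • b, hGsmul i b hb (-c) (by linarith),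
              (-c) • a, hGsmul i a ha (-c) (by linarith), by module⟩ } with hM
    have hGM : G i = Kt i ∩ (M : Set (EuclideanSpace ℝ (Fin (d i)))) := by
      apply Set.Subset.antisymm
      · intro y hy
        exact ⟨hGsub i hy, y, hy, 0, h0G i, by simp⟩
      · rintro y ⟨hyK, a, ha, b, hb, rfl⟩
        have hcombo : (1/2 : ℝ) • (a - b) + (1 - 1/2 : ℝ) • b ∈ G i := by
          have heq : (1/2 : ℝ) • (a - b) + (1 - 1/2 : ℝ) • b = (1/2 : ℝ) • a := by module
          rw [heq]
          exact hGsmul i a ha _ (by norm_num)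
        exact ((hGface i).2.2 hyK (hGsub i hb) (by norm_num) (by norm_num) hcombo).1
    rw [hGM]
    exact (hKt i).1.inter M.closed_of_finiteDimensional
  -- the product of the `G i` intersected with `L` equals `S`
  set F : Set (∀ i, EuclideanSpace ℝ (Fin (d i))) := {x | ∀ i, x i ∈ G i} with hF
  have hSF : S = F ∩ L := by
    apply Set.Subset.antisymm
    · rintro w hw
      obtain ⟨t, ht, hts⟩ := exists_extension_of_mem_intrinsicInterior hz hw
      refine ⟨fun i => ⟨hw.1 i, (1 + t)/t, by positivity, ?_⟩, hw.2⟩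
      have hKti : z i + t • (z i - w i) ∈ Kt i := by
        have := hts.1 i
        simpa using this
      have heq : ((1 + t)/t) • z i - w i = (1/t) • (z i + t • (z i - w i)) := by
        match_scalars <;> field_simp
      rw [heq]
      exact (hKt i).2.2.2 _ hKti _ (by positivity)
    · rintro w ⟨hwF, hwL⟩
      exact ⟨fun i => hGsub i (hwF i), hwL⟩
  have hzF : z ∈ F := fun i => hzG i
  have hFconv : Convex ℝ F := by
    intro x hx y hy a b ha hb hab i
    exact hGconv i (hx i) (hy i) ha hb hab
  -- `z` is in the intrinsic interior of `F`
  have hzFi : z ∈ intrinsicInterior ℝ F := by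
    apply mem_intrinsicInterior_of_extension hFconv hzF
    intro y hy
    choose μ hμ0 hμK using fun i => (hy i).2
    set M : ℝ := ∑ i, μ i with hMdef
    have hM0 : 0 ≤ M := Finset.sum_nonneg fun i _ => hμ0 i
    have hMKt : ∀ i, M • z i - y i ∈ Kt i := by
      intro i
      have hle : μ i ≤ M := Finset.single_le_sum (fun j _ => hμ0 j) (Finset.mem_univ i)
      have heq : M • z i - y i = (μ i • z i - y i) + (M - μ i) • z i := by module
      rw [heq]
      exact ccc_add_mem (hKt i).2.1 (hKt i).2.2.2 (hμK i)
        ((hKt i).2.2.2 _ (hzS.1 i) _ (by linarith))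
    set t : ℝ := 1 / (M + 1) with htdef
    have ht : 0 < t := by positivity
    refine ⟨t, ht, ?_⟩
    intro i
    have happ : (z + t • (z - y)) i = (1 + t) • z i - t • y i := by
      simp [Pi.add_apply, Pi.smul_apply, Pi.sub_apply]
      module
    rw [happ]
    constructor
    · have heq : (1 + t) • z i - t • y i
          = t • (M • z i - y i) + (1 + t - t * M) • z i := by module
      have hcoef : 0 ≤ 1 + t - t * M := by
        have : t * M = M / (M + 1) := by rw [htdef]; ring
        rw [this]
        have : M / (M + 1) < 1 := by
          rw [div_lt_one (by linarith)]; linarith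
        linarith
      rw [heq]
      exact ccc_add_mem (hKt i).2.1 (hKt i).2.2.2
        ((hKt i).2.2.2 _ (hMKt i) _ ht.le)
        ((hKt i).2.2.2 _ (hzS.1 i) _ hcoef)
    · refine ⟨1 + t, by positivity, ?_⟩
      have heq : (1 + t) • z i - ((1 + t) • z i - t • y i) = t • y i := by module
      rw [heq]
      exact (hKt i).2.2.2 _ ((hy i).1) _ ht.le
  -- conclusion
  refine ⟨m, hm, d, G, fun i => ⟨hGclosed i, hGconv i, h0G i, hGsmul i⟩,
    fun i => FaceChainBound.of_face (hGface i) (hKtl i), π, L, ?_, z, hzS.2, hzFi⟩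
  rw [hCeq]
  congr 1
end
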